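/- Let G be the infinite ternary word that is the fixed point, starting with 0, of the morphism γ defined by γ(0)=01, γ(1)=2, γ(2)=02 (so G = 012020102012010201202⋯). Then p_G(n) = 2n + 1 for all n ≥ 0. -/

import Mathlib

/-- The factor of the infinite word `u` of length `m` starting at position `i`. -/
def factorAt {k : ℕ} (u : ℕ → Fin k) (i m : ℕ) : List (Fin k) :=
  (List.range m).map fun j => u (i + j)

/-- `v` is a factor of the infinite word `u`. -/
def IsFactor {k : ℕ} (v : List (Fin k)) (u : ℕ → Fin k) : Prop :=
  ∃ i, v = factorAt u i v.length

/-- Subword complexity: the number of distinct factors of length `n`. -/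
noncomputable def complexity {k : ℕ} (u : ℕ → Fin k) (n : ℕ) : ℕ :=
  Set.ncard {v : List (Fin k) | v.length = n ∧ IsFactor v u}

/-- The word `w` has period `q` (`1 ≤ q ≤ |w|`, and `w(i) = w(i+q)` whenever defined). -/
def HasPer {A : Type*} (w : List A) (q : ℕ) : Prop :=
  1 ≤ q ∧ q ≤ w.length ∧ ∀ i, i + q < w.length → w[i]? = w[i + q]?

/-- The minimal period of a finite word. -/
noncomputable def minPer {A : Type*} (w : List A) : ℕ := sInf {q | HasPer w q}

/-- The exponent of a finite word: its length divided by its minimal period. -/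
noncomputable def exponent {A : Type*} (w : List A) : ℝ := (w.length : ℝ) / (minPer w : ℝ)

/-- `u` is `α`-power-free: no nonempty factor has exponent `≥ α`. -/
def PowerFree {k : ℕ} (α : ℝ) (u : ℕ → Fin k) : Prop :=
  ∀ v : List (Fin k), v ≠ [] → IsFactor v u → exponent v < α

/-- `u` is `α⁺`-power-free: no nonempty factor has exponent `> α`. -/
def PowerFreePlus {k : ℕ} (α : ℝ) (u : ℕ → Fin k) : Prop :=
  ∀ v : List (Fin k), v ≠ [] → IsFactor v u → exponent v ≤ α

/-- Overlap-free means `2⁺`-power-free. -/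
def OverlapFree {k : ℕ} (u : ℕ → Fin k) : Prop := PowerFreePlus 2 u

/-- The Thue–Morse word: `t n` is the number of 1's, mod 2, in the binary expansion of `n`. -/
def thueMorse : ℕ → Fin 2 := fun n => Fin.ofNat 2 ((Nat.digits 2 n).count 1)

/-- The morphism γ: 0 → 01, 1 → 2, 2 → 02. -/
def gammaM (w : List (Fin 3)) : List (Fin 3) :=
  w.flatMap fun a => if a = 0 then [0, 1] else if a = 1 then [2] else [0, 2]

/-- The word G: the fixed point of γ starting with 0. -/
def Gword : ℕ → Fin 3 := fun n => ((gammaM^[n + 1]) [0]).getD n 0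

abbrev Word := List (Fin 3)

@[simp] lemma length_factorAt {k : ℕ} (u : ℕ → Fin k) (i m : ℕ) :
    (factorAt u i m).length = m := by simp [factorAt]

@[simp] lemma factorAt_zero {k : ℕ} (u : ℕ → Fin k) (i : ℕ) : factorAt u i 0 = [] := by
  simp [factorAt]

lemma factorAt_getElem {k : ℕ} (u : ℕ → Fin k) (i m j : ℕ) (h : j < m) :
    (factorAt u i m)[j]'(by simpa using h) = u (i + j) := by
  simp [factorAt]

lemma factorAt_succ {k : ℕ} (u : ℕ → Fin k) (i m : ℕ) :
    factorAt u i (m + 1) = factorAt u i m ++ [u (i + m)] := by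
  simp [factorAt, List.range_succ]

lemma factorAt_add {k : ℕ} (u : ℕ → Fin k) (i a b : ℕ) :
    factorAt u i (a + b) = factorAt u i a ++ factorAt u (i + a) b := by
  induction b with
  | zero => simp
  | succ b ih =>
      rw [show a + (b+1) = (a+b)+1 from rfl, factorAt_succ, ih, factorAt_succ]
      simp [List.append_assoc, Nat.add_assoc]

lemma fac_factorAt {k : ℕ} (u : ℕ → Fin k) (i m : ℕ) : IsFactor (factorAt u i m) u :=
  ⟨i, by simp⟩

lemma gammaM_append (u v : Word) : gammaM (u ++ v) = gammaM u ++ gammaM v := by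
  simp [gammaM]

lemma gammaM_cons (a : Fin 3) (v : Word) : gammaM (a :: v) = gammaM [a] ++ gammaM v := by
  simp [gammaM]

@[simp] lemma gammaM_nil : gammaM [] = [] := rfl

@[simp] lemma gammaM0 : gammaM [0] = [0, 1] := rfl
@[simp] lemma gammaM1 : gammaM [1] = [2] := rfl
@[simp] lemma gammaM2 : gammaM [2] = [0, 2] := rfl

lemma length_gammaM_ge (v : Word) : v.length ≤ (gammaM v).length := by
  induction v with
  | nil => simp
  | cons a t ih =>
      rw [gammaM_cons]
      fin_cases a <;> simp_all <;> omega

lemma gammaM_ne_nil {v : Word} (h : v ≠ []) : gammaM v ≠ [] := by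
  cases v with
  | nil => simp at h
  | cons a t =>
      rw [gammaM_cons]
      fin_cases a <;> simp

lemma gammaM_injective : Function.Injective gammaM := by
  intro u
  induction u with
  | nil =>
      intro v h
      cases v with
      | nil => rfl
      | cons b t => exact absurd h.symm (gammaM_ne_nil (by simp))
  | cons a t ih =>
      intro v h
      cases v with
      | nil => exact absurd h (gammaM_ne_nil (by simp))
      | cons b s =>
          rw [gammaM_cons, gammaM_cons (a := b)] at h
          fin_cases a <;> fin_cases b <;> simp_all <;>
            first
            | (exact ih h)
            | (exact ih (by simp_all))

lemma gammaM_suffix {u v : Word} (h : u <:+ v) : gammaM u <:+ gammaM v := by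
  obtain ⟨t, rfl⟩ := h
  exact ⟨gammaM t, (gammaM_append t u).symm⟩

-- the iterates
def Wit (n : ℕ) : Word := (gammaM^[n]) [0]

lemma Wit_succ (n : ℕ) : Wit (n + 1) = gammaM (Wit n) := by
  simp [Wit, Function.iterate_succ_apply']

lemma Wit_prefix (n : ℕ) : Wit n <+: Wit (n + 1) := by
  induction n with
  | zero => exact ⟨[1], rfl⟩
  | succ n ih =>
      obtain ⟨t, ht⟩ := ih
      rw [Wit_succ, Wit_succ]
      exact ⟨gammaM t, by rw [← gammaM_append, ht]⟩

lemma Wit_prefix_le {m n : ℕ} (h : m ≤ n) : Wit m <+: Wit n := by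
  induction n with
  | zero => simpa [Nat.le_zero.mp h]
  | succ n ih =>
      rcases Nat.lt_or_ge m (n+1) with h' | h'
      · exact (ih (by omega)).trans (Wit_prefix n)
      · have : m = n + 1 := by omega
        simp [this]

lemma Wit_head (n : ℕ) : ∃ t, Wit n = 0 :: t := by
  have := Wit_prefix_le (Nat.zero_le n)
  obtain ⟨t, ht⟩ := this
  exact ⟨t, by simpa [Wit] using ht.symm⟩

lemma Wit_length (n : ℕ) : n + 1 ≤ (Wit n).length := by
  induction n with
  | zero => simp [Wit]
  | succ n ih =>
      obtain ⟨t, ht⟩ := Wit_head n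
      rw [Wit_succ, ht, gammaM_cons]
      have := length_gammaM_ge t
      simp only [gammaM0]
      have : n + 1 ≤ t.length + 1 := by
        have h2 : (0 :: t : Word).length = t.length + 1 := by simp
        rw [ht] at ih; omega
      simp; omega

lemma Gword_eq_Wit {n k : ℕ} (h : n < (Wit k).length) : Gword n = (Wit k)[n] := by
  have h1 : n < (Wit (n+1)).length := by have := Wit_length (n+1); omega
  have heq : Gword n = (Wit (n+1))[n] := by
    show ((gammaM^[n+1]) [0]).getD n 0 = _
    rw [show ((gammaM^[n+1]) [0]) = Wit (n+1) from rfl, List.getD_eq_getElem _ _ h1]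
  rw [heq]
  rcases Nat.le_total (n+1) k with h' | h'
  · exact (Wit_prefix_le h').getElem h1
  · exact ((Wit_prefix_le h').getElem h).symm

-- prefixes of G
def pre (n : ℕ) : Word := factorAt Gword 0 n

lemma pre_eq_take {n k : ℕ} (h : n ≤ (Wit k).length) : pre n = (Wit k).take n := by
  apply List.ext_getElem
  · simp [pre]; omega
  · intro j h1 h2
    have hj : j < n := by simpa [pre] using h1
    rw [List.getElem_take]
    show (factorAt Gword 0 n)[j]'(by simpa using hj) = _
    rw [factorAt_getElem _ _ _ _ hj]
    simpa using Gword_eq_Wit (k := k) (by omega)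

lemma gammaM_pre_pre (n : ℕ) : gammaM (pre n) = pre (gammaM (pre n)).length := by
  have hk : n ≤ (Wit n).length := by have := Wit_length n; omega
  rw [pre_eq_take hk]
  have hsplit : Wit (n+1) = gammaM ((Wit n).take n) ++ gammaM ((Wit n).drop n) := by
    rw [← gammaM_append, List.take_append_drop, Wit_succ]
  have hlen : (gammaM ((Wit n).take n)).length ≤ (Wit (n+1)).length := by
    rw [hsplit]; simp
  rw [pre_eq_take (k := n+1) hlen, hsplit]
  rw [List.take_left' rfl]

-- LAYER2
def cut (n : ℕ) : ℕ := (gammaM (pre n)).length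

lemma gammaM_pre (n : ℕ) : gammaM (pre n) = pre (cut n) := gammaM_pre_pre n

@[simp] lemma cut_zero : cut 0 = 0 := by simp [cut, pre]

lemma pre_succ (n : ℕ) : pre (n + 1) = pre n ++ [Gword n] := by
  have := factorAt_succ Gword 0 n
  simpa [pre] using this

lemma cut_succ (n : ℕ) : cut (n + 1) = cut n + (gammaM [Gword n]).length := by
  simp [cut, pre_succ, gammaM_append]

lemma size_pos (x : Fin 3) : 1 ≤ (gammaM [x]).length := by fin_cases x <;> simp

lemma size_le (x : Fin 3) : (gammaM [x]).length ≤ 2 := by fin_cases x <;> simp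

lemma size_eq (x : Fin 3) : (gammaM [x]).length = if x = 1 then 1 else 2 := by
  fin_cases x <;> simp

lemma cut_strictMono : StrictMono cut :=
  strictMono_nat_of_lt_succ (fun n => by have := size_pos (Gword n); rw [cut_succ]; omega)

lemma cut_ge (n : ℕ) : n ≤ cut n := by
  induction n with
  | zero => simp
  | succ n ih => have := size_pos (Gword n); rw [cut_succ]; omega

@[simp] lemma Gword_zero : Gword 0 = 0 := rfl

lemma cut_gt {n : ℕ} (h : 1 ≤ n) : n + 1 ≤ cut n := by
  induction n with
  | zero => omega
  | succ n ih =>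
      rcases Nat.eq_zero_or_pos n with rfl | hn
      · simp [cut_succ]
      · have := size_pos (Gword n); rw [cut_succ]; have := ih hn; omega

lemma pre_getD (n j : ℕ) (h : j < n) : (pre n).getD j 0 = Gword j := by
  have hl : j < (pre n).length := by simp [pre]; omega
  rw [List.getD_eq_getElem _ _ hl]
  show (factorAt Gword 0 n)[j]'_ = _
  exact (factorAt_getElem _ _ _ _ h).trans (by simp)

lemma pre_cut_succ (k : ℕ) : pre (cut (k + 1)) = pre (cut k) ++ gammaM [Gword k] := by
  rw [← gammaM_pre, ← gammaM_pre, pre_succ, gammaM_append]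

lemma blockG (k j : ℕ) (h : j < (gammaM [Gword k]).length) :
    Gword (cut k + j) = (gammaM [Gword k]).getD j 0 := by
  have hc : cut (k+1) = cut k + (gammaM [Gword k]).length := cut_succ k
  have hlt : cut k + j < cut (k+1) := by omega
  have h1 : Gword (cut k + j) = (pre (cut (k+1))).getD (cut k + j) 0 :=
    (pre_getD _ _ hlt).symm
  rw [h1, pre_cut_succ k]
  have hlp : (pre (cut k)).length = cut k := by simp [pre, cut]
  rw [List.getD_append_right _ _ _ _ (by omega), hlp]
  congr 1; omega

lemma blk0 {k : ℕ} (h : Gword k = 0) :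
    Gword (cut k) = 0 ∧ Gword (cut k + 1) = 1 ∧ cut (k+1) = cut k + 2 := by
  have h0 := blockG k 0 (by rw [h]; simp)
  have h1 := blockG k 1 (by rw [h]; simp)
  rw [h] at h0 h1
  refine ⟨by simpa using h0, by simpa using h1, by rw [cut_succ, h]; simp⟩

lemma blk1 {k : ℕ} (h : Gword k = 1) :
    Gword (cut k) = 2 ∧ cut (k+1) = cut k + 1 := by
  have h0 := blockG k 0 (by rw [h]; simp)
  rw [h] at h0
  exact ⟨by simpa using h0, by rw [cut_succ, h]; simp⟩

lemma blk2 {k : ℕ} (h : Gword k = 2) :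
    Gword (cut k) = 0 ∧ Gword (cut k + 1) = 2 ∧ cut (k+1) = cut k + 2 := by
  have h0 := blockG k 0 (by rw [h]; simp)
  have h1 := blockG k 1 (by rw [h]; simp)
  rw [h] at h0 h1
  refine ⟨by simpa using h0, by simpa using h1, by rw [cut_succ, h]; simp⟩

lemma fin3_cases (x : Fin 3) : x = 0 ∨ x = 1 ∨ x = 2 := by fin_cases x <;> simp

lemma first_letter (k : ℕ) : Gword (cut k) = if Gword k = 1 then 2 else 0 := by
  rcases fin3_cases (Gword k) with h | h | h
  · rw [h, (blk0 h).1]; simp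
  · rw [h, (blk1 h).1]; simp
  · rw [h, (blk2 h).1]; simp

lemma coverage (i : ℕ) : ∃ k, cut k ≤ i ∧ i < cut (k + 1) := by
  classical
  set P := fun k => cut k ≤ i with hP
  have h0 : P 0 := by simp [hP]
  set k := Nat.findGreatest P (i+1) with hk
  have hspec : P k := Nat.findGreatest_spec (Nat.zero_le _) h0
  refine ⟨k, hspec, ?_⟩
  by_contra hcon
  push_neg at hcon
  have hk1 : P (k+1) := hcon
  have : k + 1 ≤ i + 1 := by
    have := cut_ge (k+1); simp only [hP] at hk1; omega
  have := Nat.findGreatest_is_greatest (lt_add_one k) this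
  exact this hk1

-- width-2 membership: every i is cut k or cut k + 1
lemma coverage' (i : ℕ) : ∃ k, i = cut k ∨ (i = cut k + 1 ∧ cut (k+1) = cut k + 2) := by
  obtain ⟨k, h1, h2⟩ := coverage i
  refine ⟨k, ?_⟩
  have hs := size_le (Gword k)
  have hc := cut_succ k
  rcases Nat.eq_or_lt_of_le h1 with h | h
  · exact Or.inl h.symm
  · right; constructor <;> omega

def okp (a b : Fin 3) : Prop := (a = 0 ∧ (b = 1 ∨ b = 2)) ∨ (a = 1 ∧ (b = 0 ∨ b = 2)) ∨ (a = 2 ∧ b = 0)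

instance (a b : Fin 3) : Decidable (okp a b) := by unfold okp; infer_instance

theorem pairG : ∀ i, okp (Gword i) (Gword (i + 1)) := by
  intro i
  induction i using Nat.strong_induction_on with
  | _ i IH =>
  obtain ⟨k, hk⟩ := coverage' i
  rcases fin3_cases (Gword k) with hx | hx | hx
  · obtain ⟨e0, e1, e2⟩ := blk0 hx
    rcases hk with h | ⟨h, _⟩
    · subst h; rw [e0, e1]; left; exact ⟨rfl, Or.inl rfl⟩
    · -- i = cut k + 1, G i = 1, i+1 = cut (k+1)
      have hGi : Gword i = 1 := by rw [h]; exact e1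
      have hnext : i + 1 = cut (k+1) := by omega
      have hfl := first_letter (k+1)
      rw [hGi, hnext, hfl]
      by_cases h1 : Gword (k+1) = 1
      · simp only [h1, if_pos rfl]
        right; left; exact ⟨rfl, Or.inr rfl⟩
      · simp only [if_neg h1]
        right; left; exact ⟨rfl, Or.inl rfl⟩
  · obtain ⟨e0, e2⟩ := blk1 hx
    have hik : i = cut k := by
      rcases hk with h | ⟨h, h'⟩
      · exact h
      · omega
    subst hik
    have hk1 : 1 ≤ k := by
      by_contra hc
      push_neg at hc
      interval_cases k
      · rw [Gword_zero] at hx; exact absurd hx (by decide)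
    have hklt : k < cut k := cut_gt hk1
    have hIH := IH k hklt
    rw [hx] at hIH
    have hG1 : Gword (k+1) ≠ 1 := by
      rcases hIH with ⟨h,_⟩|⟨_,h⟩|⟨h,_⟩
      · exact absurd h (by decide)
      · rcases h with h|h <;> (rw [h]; decide)
      · exact absurd h (by decide)
    have hnext : cut k + 1 = cut (k+1) := by omega
    rw [e0, hnext, first_letter (k+1), if_neg hG1]
    right; right; exact ⟨rfl, rfl⟩
  · obtain ⟨e0, e1, e2⟩ := blk2 hx
    rcases hk with h | ⟨h, _⟩
    · subst h; rw [e0, e1]; left; exact ⟨rfl, Or.inr rfl⟩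
    · have hGi : Gword i = 2 := by rw [h]; exact e1
      have hnext : i + 1 = cut (k+1) := by omega
      have hklt : k < i := by have := cut_ge k; omega
      have hIH := IH k hklt
      rw [hx] at hIH
      have hG1 : Gword (k+1) = 0 := by
        rcases hIH with ⟨h',_⟩|⟨h',_⟩|⟨_,h'⟩
        · exact absurd h' (by decide)
        · exact absurd h' (by decide)
        · exact h'
      have hfl := first_letter (k+1)
      rw [hGi, hnext]
      rw [hG1] at hfl
      rw [hfl]
      simp only [if_neg (show (0:Fin 3) ≠ 1 by decide)]
      right; right; exact ⟨rfl, rfl⟩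

lemma seg (k0 m : ℕ) :
    gammaM (factorAt Gword k0 m) = factorAt Gword (cut k0) (cut (k0 + m) - cut k0) := by
  have h1 : pre (k0 + m) = pre k0 ++ factorAt Gword k0 m := by
    have := factorAt_add Gword 0 k0 m
    simpa [pre] using this
  have h2 : pre (cut (k0 + m)) = pre (cut k0) ++ factorAt Gword (cut k0) (cut (k0+m) - cut k0) := by
    have hle : cut k0 ≤ cut (k0 + m) := cut_strictMono.monotone (by omega)
    have := factorAt_add Gword 0 (cut k0) (cut (k0+m) - cut k0)
    rw [show cut k0 + (cut (k0+m) - cut k0) = cut (k0+m) by omega] at this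
    simpa [pre] using this
  have h3 : pre (cut (k0 + m)) = pre (cut k0) ++ gammaM (factorAt Gword k0 m) := by
    rw [← gammaM_pre, ← gammaM_pre, h1, gammaM_append]
  rw [h3] at h2
  exact List.append_cancel_left h2

-- Factor closure lemmas
lemma fac_infix {w u : Word} (hw : IsFactor w Gword) (h : u <:+: w) : IsFactor u Gword := by
  obtain ⟨i, hi⟩ := hw
  obtain ⟨t1, t2, ht⟩ := h
  have hlen : w.length = t1.length + (u.length + t2.length) := by rw [← ht]; simp [List.length_append]
  rw [hlen, factorAt_add, factorAt_add] at hi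
  rw [← ht] at hi
  have hi' : t1 ++ (u ++ t2) = factorAt Gword i t1.length ++
      (factorAt Gword (i + t1.length) u.length ++
        factorAt Gword (i + t1.length + u.length) t2.length) := by
    simpa [List.append_assoc] using hi
  obtain ⟨h1, h2⟩ := List.append_inj hi' (by simp)
  obtain ⟨h3, h4⟩ := List.append_inj h2 (by simp)
  exact ⟨i + t1.length, h3⟩

lemma fac_gamma {v : Word} (hv : IsFactor v Gword) : IsFactor (gammaM v) Gword := by
  obtain ⟨i, hi⟩ := hv
  have := seg i v.length
  rw [← hi] at this
  refine ⟨cut i, ?_⟩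
  have hl : (gammaM v).length = cut (i + v.length) - cut i := by rw [this]; simp
  rw [hl]
  exact this

lemma fac_factor (i m : ℕ) : IsFactor (factorAt Gword i m) Gword := by
  refine ⟨i, ?_⟩; congr 1; simp

-- synchronization
lemma cut0 {i : ℕ} (h : Gword i = 0) : ∃ k, cut k = i := by
  obtain ⟨k, hk⟩ := coverage' i
  rcases hk with hk | ⟨hk, hw⟩
  · exact ⟨k, hk.symm⟩
  · exfalso
    rcases fin3_cases (Gword k) with hx | hx | hx
    · have := (blk0 hx).2.1; rw [hk] at h; rw [this] at h; exact absurd h (by decide)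
    · have := (blk1 hx).2; omega
    · have := (blk2 hx).2.1; rw [hk] at h; rw [this] at h; exact absurd h (by decide)

lemma pos1 {i : ℕ} (h : Gword i = 1) :
    ∃ k, cut k + 1 = i ∧ Gword k = 0 ∧ cut (k + 1) = i + 1 := by
  obtain ⟨k, hk⟩ := coverage' i
  rcases hk with hk | ⟨hk, hw⟩
  · exfalso
    rw [hk, first_letter k] at h
    by_cases h1 : Gword k = 1
    · rw [if_pos h1] at h; exact absurd h (by decide)
    · rw [if_neg h1] at h; exact absurd h (by decide)
  · refine ⟨k, hk.symm, ?_, by omega⟩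
    rcases fin3_cases (Gword k) with hx | hx | hx
    · exact hx
    · exfalso; have := (blk1 hx).2; omega
    · exfalso; have := (blk2 hx).2.1; rw [hk, this] at h; exact absurd h (by decide)

lemma pos2 {i : ℕ} (h : Gword i = 2) :
    (∃ k, cut k = i ∧ Gword k = 1 ∧ cut (k + 1) = i + 1) ∨
    (∃ k, cut k + 1 = i ∧ Gword k = 2 ∧ cut (k + 1) = i + 1) := by
  obtain ⟨k, hk⟩ := coverage' i
  rcases hk with hk | ⟨hk, hw⟩
  · left
    refine ⟨k, hk.symm, ?_, ?_⟩
    · rw [hk, first_letter k] at h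
      by_cases h1 : Gword k = 1
      · exact h1
      · rw [if_neg h1] at h; exact absurd h (by decide)
    · have h1 : Gword k = 1 := by
        rw [hk, first_letter k] at h
        by_cases h1 : Gword k = 1
        · exact h1
        · rw [if_neg h1] at h; exact absurd h (by decide)
      have := (blk1 h1).2; omega
  · right
    refine ⟨k, hk.symm, ?_, by omega⟩
    rcases fin3_cases (Gword k) with hx | hx | hx
    · exfalso; have := (blk0 hx).2.1; rw [hk, this] at h; exact absurd h (by decide)
    · exfalso; have := (blk1 hx).2; omega
    · exact hx

-- LAYER 3
abbrev Fac (v : Word) : Prop := IsFactor v Gword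

lemma occ_getD {v : Word} {i : ℕ} (h : v = factorAt Gword i v.length) :
    ∀ j, j < v.length → v.getD j 0 = Gword (i + j) := by
  intro j hj
  conv_lhs => rw [h]
  rw [List.getD_eq_getElem _ _ (by simpa using hj)]
  exact factorAt_getElem _ _ _ _ hj

lemma pairFac {w : Word} (h : Fac w) (j : ℕ) (hj : j + 1 < w.length) :
    okp (w.getD j 0) (w.getD (j+1) 0) := by
  obtain ⟨i, hi⟩ := h
  rw [occ_getD hi j (by omega), occ_getD hi (j+1) hj]
  rw [show i + (j+1) = (i + j) + 1 by omega]
  exact pairG (i + j)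

lemma fac_pair_append {u : Word} {aa bb : Fin 3} (h : Fac (u ++ [aa, bb])) : okp aa bb := by
  have hj : u.length + 1 < (u ++ [aa, bb]).length := by simp
  have := pairFac h u.length hj
  rw [List.getD_append_right _ _ _ _ (le_refl _), List.getD_append_right _ _ _ _ (by omega)] at this
  simpa using this

lemma fac_single (k : ℕ) : Fac [Gword k] := by
  refine ⟨k, ?_⟩
  simp [factorAt, List.range_succ]

-- first letters of images of gammaM
lemma gamma_first {v t : Word} {b : Fin 3} (h : gammaM v = b :: t) : b = 0 ∨ b = 2 := by
  cases v with
  | nil => simp at h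
  | cons a v' =>
      rw [gammaM_cons] at h
      fin_cases a <;> simp_all

lemma gamma_two_cons {v t : Word} (h : gammaM v = 2 :: t) : ∃ v₂, v = 1 :: v₂ ∧ gammaM v₂ = t := by
  cases v with
  | nil => simp at h
  | cons a v' =>
      rw [gammaM_cons] at h
      fin_cases a
      · exfalso; simp at h
      · exact ⟨v', by simp at h ⊢; exact h⟩
      · exfalso; simp at h

def sOK (s : Word) : Prop := s = [] ∨ s = [1] ∨ s = [2]

lemma reconcile {s s' v v' : Word} (hs : sOK s) (hs' : sOK s')
    (h : s ++ gammaM v = s' ++ gammaM v') :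
    (s = s' ∧ v = v') ∨ (s = [] ∧ s' = [2] ∧ v = 1 :: v') ∨ (s' = [] ∧ s = [2] ∧ v' = 1 :: v) := by
  have diag : ∀ v v' : Word, gammaM v = gammaM v' → v = v' := fun _ _ hh => gammaM_injective hh
  rcases hs with rfl | rfl | rfl <;> rcases hs' with rfl | rfl | rfl
  · exact Or.inl ⟨rfl, diag _ _ (by simpa using h)⟩
  · exfalso
    simp only [List.nil_append, List.singleton_append] at h
    rcases gamma_first h with h' | h' <;> exact absurd h' (by decide)
  · right; left
    simp only [List.nil_append, List.singleton_append] at h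
    obtain ⟨v₂, hv₂, hg⟩ := gamma_two_cons h
    exact ⟨rfl, rfl, by rw [hv₂, diag _ _ hg]⟩
  · exfalso
    simp only [List.nil_append, List.singleton_append] at h
    rcases gamma_first h.symm with h' | h' <;> exact absurd h' (by decide)
  · exact Or.inl ⟨rfl, diag _ _ (by simpa using h)⟩
  · exfalso
    simp only [List.singleton_append] at h
    injection h with h1 _
    exact absurd h1 (by decide)
  · right; right
    simp only [List.nil_append, List.singleton_append] at h
    obtain ⟨v₂, hv₂, hg⟩ := gamma_two_cons h.symm
    exact ⟨rfl, rfl, by rw [hv₂, diag _ _ hg.symm]⟩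
  · exfalso
    simp only [List.singleton_append] at h
    injection h with h1 _
    exact absurd h1 (by decide)
  · exact Or.inl ⟨rfl, diag _ _ (by simpa using h)⟩

-- LAYER 4 : desubstitution
lemma factorAt_one {k : ℕ} (u : ℕ → Fin k) (p : ℕ) : factorAt u p 1 = [u p] := by
  simp [factorAt, List.range_succ]

lemma factorAt_two {k : ℕ} (u : ℕ → Fin k) (p : ℕ) : factorAt u p 2 = [u p, u (p+1)] := by
  have : factorAt u p 2 = factorAt u p 1 ++ [u (p + 1)] := factorAt_succ u p 1
  rw [this, factorAt_one]; rfl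

lemma occ_split3 {A B C : Word} {i : ℕ}
    (h : A ++ B ++ C = factorAt Gword i (A.length + B.length + C.length)) :
    A = factorAt Gword i A.length ∧ B = factorAt Gword (i + A.length) B.length ∧
      C = factorAt Gword (i + A.length + B.length) C.length := by
  rw [factorAt_add Gword i (A.length + B.length) C.length,
    factorAt_add Gword i A.length B.length] at h
  have h' : A ++ (B ++ C) = factorAt Gword i A.length ++
      (factorAt Gword (i + A.length) B.length ++
        factorAt Gword (i + (A.length + B.length)) C.length) := by
    simpa [List.append_assoc] using h
  obtain ⟨h1, h2⟩ := List.append_inj h' (by simp)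
  obtain ⟨h3, h4⟩ := List.append_inj h2 (by simp)
  refine ⟨h1, h3, ?_⟩
  have he : i + (A.length + B.length) = i + A.length + B.length := by omega
  rw [h4, he]
  simp

lemma single_occ {x : Fin 3} {p : ℕ} (h : [x] = factorAt Gword p 1) : Gword p = x := by
  rw [factorAt_one] at h; exact (List.cons.injEq _ _ _ _ ▸ h).1.symm

lemma pair_occ {x y : Fin 3} {p : ℕ} (h : [x, y] = factorAt Gword p 2) :
    Gword p = x ∧ Gword (p+1) = y := by
  rw [factorAt_two] at h
  have h1 := (List.cons.injEq _ _ _ _ ▸ h).1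
  have h2 := (List.cons.injEq _ _ _ _ ▸ h).2
  have h3 := (List.cons.injEq _ _ _ _ ▸ h2).1
  exact ⟨h1.symm, h3.symm⟩

lemma startParse (i : ℕ) : ∃ k0 d, d ≤ 1 ∧ cut k0 = i + d ∧ sOK (factorAt Gword i d) := by
  obtain ⟨k, hk⟩ := coverage' i
  rcases hk with hk | ⟨hk, hw⟩
  · exact ⟨k, 0, by omega, by omega, Or.inl (by simp)⟩
  · refine ⟨k + 1, 1, le_refl _, by omega, ?_⟩
    rw [factorAt_one]
    rcases fin3_cases (Gword k) with hx | hx | hx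
    · have := (blk0 hx).2.1
      rw [hk, this]
      exact Or.inr (Or.inl rfl)
    · exfalso; have := (blk1 hx).2; omega
    · have := (blk2 hx).2.1
      rw [hk, this]
      exact Or.inr (Or.inr rfl)

lemma headblk {k p : ℕ} {a : Fin 3} (hc : cut k = p) (h0 : Gword p = 0)
    (h1 : Gword (p+1) = a) : Gword k = if a = 1 then 0 else 2 := by
  subst hc
  rcases fin3_cases (Gword k) with hx | hx | hx
  · have := (blk0 hx).2.1
    rw [this] at h1
    rw [← h1]; simpa using hx
  · exfalso; have := (blk1 hx).1; rw [this] at h0; exact absurd h0 (by decide)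
  · have := (blk2 hx).2.1
    rw [this] at h1
    rw [← h1]; simpa using hx

lemma desubA {w₀ : Word} {a : Fin 3} (h : Fac (w₀ ++ [0, a])) :
    ∃ s v, sOK s ∧ w₀ = s ++ gammaM v ∧ Fac (v ++ [if a = 1 then 0 else 2]) := by
  obtain ⟨i, hi⟩ := h
  set ℓ := w₀.length with hℓdef
  have hi' : w₀ ++ [(0 : Fin 3)] ++ [a] = factorAt Gword i (ℓ + 1 + 1) := by
    rw [List.append_assoc]
    have hlen : (w₀ ++ [(0 : Fin 3), a]).length = ℓ + 1 + 1 := by simp [hℓdef]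
    rw [← hlen]
    simpa using hi
  have hi2 : w₀ ++ [(0 : Fin 3)] ++ [a] =
      factorAt Gword i (w₀.length + ([(0 : Fin 3)]).length + ([a] : Word).length) := by
    simpa using hi'
  obtain ⟨hA, hB, hC⟩ := occ_split3 hi2
  have he0 : Gword (i + ℓ) = 0 := by
    have := single_occ (p := i + ℓ) (by simpa [hℓdef] using hB)
    exact this
  have he1 : Gword (i + ℓ + 1) = a := by
    have := single_occ (p := i + ℓ + 1) (by simpa [hℓdef] using hC)
    exact this
  obtain ⟨k, hk⟩ := cut0 he0
  have hGk : Gword k = if a = 1 then 0 else 2 := headblk hk he0 he1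
  by_cases hℓ0 : ℓ = 0
  · have hw : w₀ = [] := List.eq_nil_of_length_eq_zero (by omega)
    refine ⟨[], [], Or.inl rfl, by simp [hw], ?_⟩
    rw [← hGk]
    simpa using fac_single k
  · obtain ⟨k0, d, hd1, hk0, hsOK⟩ := startParse i
    have hdℓ : d ≤ ℓ := by omega
    have hkk0 : k0 ≤ k := by
      have hcc : cut k0 ≤ cut k := by omega
      exact (cut_strictMono.le_iff_le).mp hcc
    have hseg := seg k0 (k - k0)
    rw [show k0 + (k - k0) = k by omega] at hseg
    refine ⟨factorAt Gword i d, factorAt Gword k0 (k - k0), hsOK, ?_, ?_⟩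
    · have hwsplit : factorAt Gword i ℓ = factorAt Gword i d ++ factorAt Gword (i+d) (ℓ - d) := by
        have := factorAt_add Gword i d (ℓ - d)
        rw [show d + (ℓ - d) = ℓ by omega] at this
        exact this
      rw [hA, hwsplit]
      congr 1
      rw [hseg, hk0, hk]
      congr 1
      omega
    · rw [← hGk]
      have hv : factorAt Gword k0 (k - k0) ++ [Gword k] = factorAt Gword k0 (k - k0 + 1) := by
        rw [factorAt_succ, show k0 + (k - k0) = k by omega]
      rw [hv]
      exact fac_factor _ _

lemma desubB {w₀ : Word} {a : Fin 3} (hw : 1 ≤ w₀.length) (h : Fac (w₀ ++ [1, a])) :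
    ∃ s v₀ x, sOK s ∧ w₀ ++ [1] = s ++ gammaM (v₀ ++ [0]) ∧ Fac (v₀ ++ [0, x]) ∧
      (a = 2 → x = 1) ∧ (a = 0 → x = 0 ∨ x = 2) := by
  obtain ⟨i, hi⟩ := h
  set ℓ := w₀.length with hℓdef
  have hi' : w₀ ++ [(1 : Fin 3)] ++ [a] = factorAt Gword i (ℓ + 1 + 1) := by
    rw [List.append_assoc]
    have hlen : (w₀ ++ [(1 : Fin 3), a]).length = ℓ + 1 + 1 := by simp [hℓdef]
    rw [← hlen]
    simpa using hi
  have hi2 : w₀ ++ [(1 : Fin 3)] ++ [a] =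
      factorAt Gword i (w₀.length + ([(1 : Fin 3)]).length + ([a] : Word).length) := by
    simpa using hi'
  obtain ⟨hA, hB, hC⟩ := occ_split3 hi2
  have he0 : Gword (i + ℓ) = 1 := by
    have := single_occ (p := i + ℓ) (by simpa [hℓdef] using hB)
    exact this
  have he1 : Gword (i + ℓ + 1) = a := by
    have := single_occ (p := i + ℓ + 1) (by simpa [hℓdef] using hC)
    exact this
  obtain ⟨kk, hkk, hGkk, hkk1⟩ := pos1 he0
  obtain ⟨k0, d, hd1, hk0, hsOK⟩ := startParse i
  have hkb : k0 ≤ kk := by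
    have h1 : cut k0 < cut (kk + 1) := by omega
    have := (cut_strictMono.lt_iff_lt).mp h1
    omega
  have hseg := seg k0 (kk + 1 - k0)
  rw [show k0 + (kk + 1 - k0) = kk + 1 by omega] at hseg
  set v₀ := factorAt Gword k0 (kk - k0) with hv₀
  have hvsplit : factorAt Gword k0 (kk + 1 - k0) = v₀ ++ [0] := by
    rw [show kk + 1 - k0 = (kk - k0) + 1 by omega, factorAt_succ]
    rw [show k0 + (kk - k0) = kk by omega, hGkk]
  set x := Gword (kk + 1) with hx
  refine ⟨factorAt Gword i d, v₀, x, hsOK, ?_, ?_, ?_, ?_⟩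
  · have hw1 : w₀ ++ [1] = factorAt Gword i (ℓ + 1) := by
      rw [factorAt_succ, ← he0]
      have hA' : w₀ = factorAt Gword i ℓ := hA
      rw [← hA']
    have hwsplit : factorAt Gword i (ℓ+1) = factorAt Gword i d ++ factorAt Gword (i+d) (ℓ + 1 - d) := by
      have := factorAt_add Gword i d (ℓ + 1 - d)
      rw [show d + (ℓ + 1 - d) = ℓ + 1 by omega] at this
      exact this
    rw [hw1, hwsplit]
    congr 1
    rw [← hvsplit, hseg, hk0]
    congr 1
    omega
  · have hfull : v₀ ++ [0, x] = factorAt Gword k0 (kk + 2 - k0) := by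
      rw [show kk + 2 - k0 = (kk + 1 - k0) + 1 by omega, factorAt_succ, hvsplit,
        show k0 + (kk + 1 - k0) = kk + 1 by omega, ← hx]
      simp
    rw [hfull]
    exact fac_factor _ _
  · intro ha2
    have hfl := first_letter (kk + 1)
    rw [hkk1] at hfl
    rw [he1, ha2] at hfl
    by_contra hne
    rw [if_neg hne] at hfl
    exact absurd hfl (by decide)
  · intro ha0
    have hfl := first_letter (kk + 1)
    rw [hkk1] at hfl
    rw [he1, ha0] at hfl
    rcases fin3_cases x with hh | hh | hh
    · exact Or.inl hh
    · exfalso; rw [if_pos hh] at hfl; exact absurd hfl (by decide)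
    · exact Or.inr hh

-- LAYER 5 : aligned desubstitution with left letter
lemma leftcut {x : Fin 3} {i : ℕ} (hx : x = 1 ∨ x = 2) (hGi : Gword i = x) :
    ∃ q, cut (q + 1) = i + 1 ∧
      ((x = 1 → Gword q = 0) ∧ (x = 2 → Gword q = 1 ∨ Gword q = 2)) := by
  rcases hx with rfl | rfl
  · obtain ⟨q, hq1, hq2, hq3⟩ := pos1 hGi
    exact ⟨q, hq3, fun _ => hq2, fun h => absurd h (by decide)⟩
  · rcases pos2 hGi with ⟨q, hq1, hq2, hq3⟩ | ⟨q, hq1, hq2, hq3⟩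
    · exact ⟨q, hq3, fun h => absurd h (by decide), fun _ => Or.inl hq2⟩
    · exact ⟨q, hq3, fun h => absurd h (by decide), fun _ => Or.inr hq2⟩

lemma megaA {v : Word} {x a : Fin 3} (hx : x = 1 ∨ x = 2)
    (h : Fac ([x] ++ gammaM v ++ [0, a])) :
    ∃ z, ((x = 1 → z = 0) ∧ (x = 2 → z = 1 ∨ z = 2)) ∧
      Fac ([z] ++ v ++ [if a = 1 then 0 else 2]) := by
  obtain ⟨i, hi⟩ := h
  set g := (gammaM v).length with hg
  have hi2 : [x] ++ (gammaM v ++ [(0 : Fin 3)]) ++ [a] =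
      factorAt Gword i (([x] : Word).length + (gammaM v ++ [(0:Fin 3)]).length + ([a] : Word).length) := by
    have h1 : [x] ++ (gammaM v ++ [(0 : Fin 3)]) ++ [a] = [x] ++ gammaM v ++ [0, a] := by
      simp
    rw [h1, hi]
    congr 1
    simp
    omega
  obtain ⟨hA, hB, hC⟩ := occ_split3 hi2
  have hGi : Gword i = x := single_occ (by simpa using hA)
  -- middle part: gammaM v at i+1, then 0 at i+1+g
  have hBlen : (gammaM v ++ [(0:Fin 3)]).length = g + 1 := by simp [hg]
  have hmid : gammaM v ++ [(0:Fin 3)] = factorAt Gword (i + 1) (g + 1) := by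
    rw [← hBlen]
    simpa using hB
  have hmid2 : gammaM v = factorAt Gword (i+1) g ∧ [(0:Fin 3)] = factorAt Gword (i+1+g) 1 := by
    rw [factorAt_add Gword (i+1) g 1] at hmid
    exact List.append_inj hmid (by simp [hg])
  have he0 : Gword (i + 1 + g) = 0 := single_occ hmid2.2
  have he1 : Gword (i + 1 + g + 1) = a := by
    have := single_occ (p := i + 1 + g + 1) (by simpa [hBlen, show i + 1 + (g+1) = i + 1 + g + 1 by omega] using hC)
    exact this
  obtain ⟨q, hq1, hqz⟩ := leftcut hx hGi
  obtain ⟨k, hk⟩ := cut0 he0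
  have hGk : Gword k = if a = 1 then 0 else 2 := headblk hk he0 he1
  have hqk : q + 1 ≤ k := by
    have : cut (q+1) ≤ cut k := by omega
    exact (cut_strictMono.le_iff_le).mp this
  have hseg := seg (q+1) (k - (q+1))
  rw [show q + 1 + (k - (q+1)) = k by omega] at hseg
  rw [hq1, hk] at hseg
  have hveq : factorAt Gword (q+1) (k - (q+1)) = v := by
    apply gammaM_injective
    rw [hseg, show i + 1 + g - (i+1) = g from by omega]
    exact hmid2.1.symm
  refine ⟨Gword q, hqz, ?_⟩
  have hfull : [Gword q] ++ (v ++ [Gword k]) = factorAt Gword q (1 + ((k - (q+1)) + 1)) := by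
    rw [factorAt_add Gword q 1 ((k - (q+1)) + 1), factorAt_one, factorAt_succ,
      show q + 1 + (k - (q+1)) = k from by omega, hveq]
  rw [← hGk]
  have hassoc : [Gword q] ++ v ++ [Gword k] = [Gword q] ++ (v ++ [Gword k]) := by simp
  rw [hassoc, hfull]
  exact fac_factor _ _

lemma megaB {v₀ : Word} {x a : Fin 3} (hx : x = 1 ∨ x = 2)
    (h : Fac ([x] ++ gammaM (v₀ ++ [0]) ++ [a])) :
    ∃ z y, ((x = 1 → z = 0) ∧ (x = 2 → z = 1 ∨ z = 2)) ∧
      ((a = 2 → y = 1) ∧ (a = 0 → y = 0 ∨ y = 2)) ∧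
      Fac ([z] ++ (v₀ ++ [0]) ++ [y]) := by
  obtain ⟨i, hi⟩ := h
  set W := gammaM (v₀ ++ [0]) with hW
  set g := W.length with hg
  have hWsplit : W = gammaM v₀ ++ [0, 1] := by
    rw [hW, gammaM_append]
    rfl
  have hglen : g = (gammaM v₀).length + 2 := by rw [hg, hWsplit]; simp
  have hi2 : [x] ++ W ++ [a] =
      factorAt Gword i (([x] : Word).length + W.length + ([a] : Word).length) := by
    rw [hi]
    congr 1
    simp
    omega
  obtain ⟨hA, hB, hC⟩ := occ_split3 hi2
  have hGi : Gword i = x := single_occ (by simpa using hA)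
  have hWocc : W = factorAt Gword (i+1) g := by simpa using hB
  -- last letter of W is 1, at position i + g
  have hlast : Gword (i + g) = 1 := by
    have h1 : W.getD (g - 1) 0 = Gword (i + 1 + (g - 1)) := occ_getD (by simpa using hWocc) (g-1) (by omega)
    rw [show i + 1 + (g - 1) = i + g by omega] at h1
    rw [← h1, hWsplit]
    have hLL : (gammaM v₀ ++ ([0, 1] : Word)).length = (gammaM v₀).length + 2 := by simp
    rw [List.getD_append_right _ _ _ _ (by omega)]
    rw [show g - 1 - (gammaM v₀).length = 1 from by omega]
    rfl
  have he1 : Gword (i + g + 1) = a := by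
    have := single_occ (p := i + 1 + g) (by simpa using hC)
    rw [show i + 1 + g = i + g + 1 by omega] at this
    exact this
  obtain ⟨kk, hkk, hGkk, hkk1⟩ := pos1 hlast
  obtain ⟨q, hq1, hqz⟩ := leftcut hx hGi
  have hqk : q + 1 ≤ kk + 1 := by
    have : cut (q+1) ≤ cut (kk + 1) := by omega
    exact (cut_strictMono.le_iff_le).mp this
  have hseg := seg (q+1) (kk + 1 - (q+1))
  rw [show q + 1 + (kk + 1 - (q+1)) = kk + 1 by omega] at hseg
  rw [hq1, hkk1] at hseg
  have hveq : factorAt Gword (q+1) (kk + 1 - (q+1)) = v₀ ++ [0] := by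
    apply gammaM_injective
    rw [hseg, show i + g + 1 - (i+1) = g from by omega, ← hW]
    exact hWocc.symm
  set y := Gword (kk + 1) with hy
  refine ⟨Gword q, y, hqz, ?_, ?_⟩
  · constructor
    · intro ha2
      have hfl := first_letter (kk + 1)
      rw [hkk1, he1, ha2] at hfl
      by_contra hne
      rw [if_neg hne] at hfl
      exact absurd hfl (by decide)
    · intro ha0
      have hfl := first_letter (kk + 1)
      rw [hkk1, he1, ha0] at hfl
      rcases fin3_cases y with hh | hh | hh
      · exact Or.inl hh
      · exfalso; rw [if_pos hh] at hfl; exact absurd hfl (by decide)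
      · exact Or.inr hh
  · have hfull : [Gword q] ++ ((v₀ ++ [0]) ++ [y]) = factorAt Gword q (1 + ((kk + 1 - (q+1)) + 1)) := by
      rw [factorAt_add Gword q 1 ((kk + 1 - (q+1)) + 1), factorAt_one, factorAt_succ,
        show q + 1 + (kk + 1 - (q+1)) = kk + 1 from by omega, hveq, ← hy]
    have hassoc : [Gword q] ++ (v₀ ++ [0]) ++ [y] = [Gword q] ++ ((v₀ ++ [0]) ++ [y]) := by simp
    rw [hassoc, hfull]
    exact fac_factor _ _

-- LAYER 6 : the chains P, Q and Aseq, Bseq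
lemma Gsmall : Gword 0 = 0 ∧ Gword 1 = 1 ∧ Gword 2 = 2 ∧ Gword 3 = 0 ∧ Gword 4 = 2
    ∧ Gword 5 = 0 ∧ Gword 6 = 1 ∧ Gword 7 = 0 := by decide

lemma fac_pair_at (p : ℕ) : Fac [Gword p, Gword (p+1)] := by
  have h : [Gword p, Gword (p+1)] = factorAt Gword p 2 := (factorAt_two Gword p).symm
  rw [h]
  exact fac_factor p 2

def PQ : ℕ → Word × Word
  | 0 => ([0], [1])
  | k+1 => (gammaM (PQ k).2 ++ [0], gammaM (PQ k).1)

def Pw (k : ℕ) : Word := (PQ k).1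
def Qw (k : ℕ) : Word := (PQ k).2

lemma Pw_succ (k : ℕ) : Pw (k+1) = gammaM (Qw k) ++ [0] := rfl
lemma Qw_succ (k : ℕ) : Qw (k+1) = gammaM (Pw k) := rfl
lemma Pw_zero : Pw 0 = [0] := rfl
lemma Qw_zero : Qw 0 = [1] := rfl

lemma facPQ (k : ℕ) : Fac (Pw k ++ [1]) ∧ Fac (Pw k ++ [2]) ∧ Fac (Qw k ++ [0]) ∧ Fac (Qw k ++ [2]) := by
  induction k with
  | zero =>
      obtain ⟨g0, g1, g2, g3, g4, g5, g6, g7⟩ := Gsmall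
      refine ⟨?_, ?_, ?_, ?_⟩
      · have := fac_pair_at 0; rw [g0, g1] at this; exact this
      · have := fac_pair_at 3; rw [g3, g4] at this; exact this
      · have := fac_pair_at 6; rw [g6, g7] at this; exact this
      · have := fac_pair_at 1; rw [g1, g2] at this; exact this
  | succ k ih =>
      obtain ⟨ih1, ih2, ih3, ih4⟩ := ih
      refine ⟨?_, ?_, ?_, ?_⟩
      · have h : Pw (k+1) ++ [1] = gammaM (Qw k ++ [0]) := by
          rw [Pw_succ, gammaM_append]; simp
        rw [h]; exact fac_gamma ih3
      · have h : Pw (k+1) ++ [2] = gammaM (Qw k ++ [2]) := by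
          rw [Pw_succ, gammaM_append]; simp
        rw [h]; exact fac_gamma ih4
      · have h : gammaM (Pw k ++ [2]) = (Qw (k+1) ++ [0]) ++ [2] := by
          rw [Qw_succ, gammaM_append]; simp
        have hf := fac_gamma ih2
        rw [h] at hf
        exact fac_infix hf ⟨[], [2], by simp⟩
      · have h : Qw (k+1) ++ [2] = gammaM (Pw k ++ [1]) := by
          rw [Qw_succ, gammaM_append]; simp
        rw [h]; exact fac_gamma ih1

lemma suffix_append_single {u v : Word} {a : Fin 3} (h : u <:+ v) : u ++ [a] <:+ v ++ [a] := by
  obtain ⟨t, rfl⟩ := h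
  exact ⟨t, by simp⟩

lemma PQ_suffix (k : ℕ) : Pw k <:+ Pw (k+1) ∧ Qw k <:+ Qw (k+1) := by
  induction k with
  | zero => exact ⟨⟨[2], rfl⟩, ⟨[0], rfl⟩⟩
  | succ k ih =>
      constructor
      · rw [Pw_succ, Pw_succ]
        exact suffix_append_single (gammaM_suffix ih.2)
      · rw [Qw_succ, Qw_succ]
        exact gammaM_suffix ih.1

lemma Pw_suffix_le {m k : ℕ} (h : m ≤ k) : Pw m <:+ Pw k := by
  induction k with
  | zero => simp [Nat.le_zero.mp h]
  | succ k ih =>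
      rcases Nat.lt_or_ge m (k+1) with h' | h'
      · exact (ih (by omega)).trans (PQ_suffix k).1
      · have : m = k + 1 := by omega
        simp [this]

lemma Qw_suffix_le {m k : ℕ} (h : m ≤ k) : Qw m <:+ Qw k := by
  induction k with
  | zero => simp [Nat.le_zero.mp h]
  | succ k ih =>
      rcases Nat.lt_or_ge m (k+1) with h' | h'
      · exact (ih (by omega)).trans (PQ_suffix k).2
      · have : m = k + 1 := by omega
        simp [this]

lemma Pw_last (k : ℕ) : ∃ t, Pw k = t ++ [0] := by
  cases k with
  | zero => exact ⟨[], rfl⟩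
  | succ k => exact ⟨gammaM (Qw k), rfl⟩

lemma Qw_last (k : ℕ) : ∃ t, Qw k = t ++ [1] := by
  cases k with
  | zero => exact ⟨[], rfl⟩
  | succ k =>
      obtain ⟨t, ht⟩ := Pw_last k
      refine ⟨gammaM t ++ [0], ?_⟩
      rw [Qw_succ, ht, gammaM_append]
      simp

lemma PQ_len (k : ℕ) : k + 1 ≤ (Pw k).length ∧ k + 1 ≤ (Qw k).length := by
  induction k with
  | zero => constructor <;> simp [Pw_zero, Qw_zero]
  | succ k ih =>
      constructor
      · rw [Pw_succ]
        have h1 := length_gammaM_ge (Qw k)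
        simp
        omega
      · rw [Qw_succ]
        obtain ⟨t, ht⟩ := Pw_last k
        rw [ht, gammaM_append]
        have h1 := length_gammaM_ge t
        have h2 : (Pw k).length = t.length + 1 := by rw [ht]; simp
        simp
        omega

def Aseq (n : ℕ) : Word := (Pw n).drop ((Pw n).length - n)
def Bseq (n : ℕ) : Word := (Qw n).drop ((Qw n).length - n)

lemma length_Aseq (n : ℕ) : (Aseq n).length = n := by
  have := (PQ_len n).1
  simp [Aseq]
  omega

lemma length_Bseq (n : ℕ) : (Bseq n).length = n := by
  have := (PQ_len n).2
  simp [Bseq]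
  omega

lemma suffix_drop_eq {u w : Word} (h : u <:+ w) {n : ℕ} (hn : n ≤ u.length) :
    u.drop (u.length - n) = w.drop (w.length - n) := by
  obtain ⟨t, rfl⟩ := h
  have hl : (t ++ u).length - n = t.length + (u.length - n) := by simp; omega
  rw [hl, List.drop_append, List.drop_eq_nil_of_le (as := t) (by omega)]; simp

lemma Aseq_eq (n k : ℕ) (h : n ≤ k) : Aseq n = (Pw k).drop ((Pw k).length - n) := by
  have h1 := (PQ_len n).1
  exact suffix_drop_eq (Pw_suffix_le h) (by omega)

lemma Bseq_eq (n k : ℕ) (h : n ≤ k) : Bseq n = (Qw k).drop ((Qw k).length - n) := by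
  have h1 := (PQ_len n).2
  exact suffix_drop_eq (Qw_suffix_le h) (by omega)

lemma Aseq_suffix (n : ℕ) : Aseq n <:+ Pw n := List.drop_suffix _ _
lemma Bseq_suffix (n : ℕ) : Bseq n <:+ Qw n := List.drop_suffix _ _

lemma Aseq_cons (n : ℕ) : ∃ y, Aseq (n+1) = y :: Aseq n := by
  have hlen := (PQ_len (n+1)).1
  have h1 : Aseq (n+1) = (Pw (n+1)).drop ((Pw (n+1)).length - (n+1)) := rfl
  have h2 : Aseq n = (Pw (n+1)).drop ((Pw (n+1)).length - n) := Aseq_eq n (n+1) (by omega)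
  have hidx : (Pw (n+1)).length - (n+1) < (Pw (n+1)).length := by omega
  refine ⟨(Pw (n+1))[(Pw (n+1)).length - (n+1)], ?_⟩
  rw [h1, h2, List.drop_eq_getElem_cons hidx]
  congr 2
  omega

lemma Bseq_cons (n : ℕ) : ∃ y, Bseq (n+1) = y :: Bseq n := by
  have hlen := (PQ_len (n+1)).2
  have h1 : Bseq (n+1) = (Qw (n+1)).drop ((Qw (n+1)).length - (n+1)) := rfl
  have h2 : Bseq n = (Qw (n+1)).drop ((Qw (n+1)).length - n) := Bseq_eq n (n+1) (by omega)
  have hidx : (Qw (n+1)).length - (n+1) < (Qw (n+1)).length := by omega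
  refine ⟨(Qw (n+1))[(Qw (n+1)).length - (n+1)], ?_⟩
  rw [h1, h2, List.drop_eq_getElem_cons hidx]
  congr 2
  omega

def RSA (n : ℕ) (w : Word) : Prop := w.length = n ∧ Fac (w ++ [1]) ∧ Fac (w ++ [2])
def RSB (n : ℕ) (w : Word) : Prop := w.length = n ∧ Fac (w ++ [0]) ∧ Fac (w ++ [2])

lemma Aseq_RSA (n : ℕ) : RSA n (Aseq n) := by
  refine ⟨length_Aseq n, ?_, ?_⟩
  · exact fac_infix (facPQ n).1 (suffix_append_single (Aseq_suffix n)).isInfix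
  · exact fac_infix (facPQ n).2.1 (suffix_append_single (Aseq_suffix n)).isInfix

lemma Bseq_RSB (n : ℕ) : RSB n (Bseq n) := by
  refine ⟨length_Bseq n, ?_, ?_⟩
  · exact fac_infix (facPQ n).2.2.1 (suffix_append_single (Bseq_suffix n)).isInfix
  · exact fac_infix (facPQ n).2.2.2 (suffix_append_single (Bseq_suffix n)).isInfix

lemma last_of_suffix {u w : Word} {c : Fin 3} (h : u <:+ w) (hu : u ≠ [])
    (hw : ∃ t, w = t ++ [c]) : ∃ t', u = t' ++ [c] := by
  obtain ⟨t, rfl⟩ := hw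
  obtain ⟨tw, ht⟩ := h
  cases hur : u.reverse with
  | nil =>
      exfalso
      apply hu
      simpa using congrArg List.reverse hur
  | cons hh t' =>
      have hrev := congrArg List.reverse ht
      rw [List.reverse_append, List.reverse_append, hur] at hrev
      have hrev2 : hh :: (t' ++ tw.reverse) = c :: t.reverse := by simpa using hrev
      have hhc : hh = c := (List.cons.injEq _ _ _ _ ▸ hrev2).1
      refine ⟨t'.reverse, ?_⟩
      have hu2 : u = t'.reverse ++ [hh] := by
        have := congrArg List.reverse hur
        simpa using this
      rw [hu2, hhc]

lemma Aseq_last {n : ℕ} (h : 1 ≤ n) : ∃ t, Aseq n = t ++ [0] := by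
  apply last_of_suffix (Aseq_suffix n) _ (Pw_last n)
  have := length_Aseq n
  intro hc
  rw [hc] at this
  simp at this
  omega

lemma Bseq_last {n : ℕ} (h : 1 ≤ n) : ∃ t, Bseq n = t ++ [1] := by
  apply last_of_suffix (Bseq_suffix n) _ (Qw_last n)
  have := length_Bseq n
  intro hc
  rw [hc] at this
  simp at this
  omega

-- LAYER 7 : small structural lemmas
lemma okp_adj_append {A B : Word} {y c : Fin 3} (h : Fac (A ++ [y, c] ++ B)) : okp y c := by
  have h2 : Fac (A ++ [y, c]) := fac_infix h ⟨[], B, by simp⟩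
  exact fac_pair_append h2

lemma eq_append_last {u : Word} (hu : u ≠ []) : ∃ t x, u = t ++ [(x : Fin 3)] := by
  cases hur : u.reverse with
  | nil => exact absurd (by simpa using congrArg List.reverse hur) hu
  | cons hh t' =>
      exact ⟨t'.reverse, hh, by simpa using congrArg List.reverse hur⟩

lemma NO101 : ¬ Fac [1, 0, 1] := by
  intro h
  obtain ⟨i, hi⟩ := h
  have e0 : Gword i = 1 := by
    have := occ_getD hi 0 (by simp)
    simpa using this.symm
  have e1 : Gword (i+1) = 0 := by
    have := occ_getD hi 1 (by simp)
    simpa using this.symm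
  have e2 : Gword (i+2) = 1 := by
    have := occ_getD hi 2 (by simp)
    rw [show i + 2 = i + 2 from rfl] at this
    simpa [show i + 2 = i + 2 from rfl] using this.symm
  obtain ⟨q, hq1, hq2, hq3⟩ := pos1 e0
  obtain ⟨r, hr1, hr2, hr3⟩ := pos1 e2
  have hqr : r = q + 1 := by
    have : cut r = cut (q + 1) := by omega
    exact cut_strictMono.injective this
  have := pairG q
  rw [hq2, ← hqr, hr2] at this
  exact absurd this (by decide)

lemma RSA_last {n : ℕ} {w : Word} (h : RSA n w) (hn : 1 ≤ n) : ∃ t, w = t ++ [0] := by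
  obtain ⟨t, x, ht⟩ := eq_append_last (u := w) (by intro hc; rw [hc] at h; have := h.1; simp at this; omega)
  have hf : Fac (t ++ [x, 1] ++ []) := by
    have := h.2.1
    rw [ht] at this
    simpa using this
  have := okp_adj_append hf
  have hx : x = 0 := by
    rcases fin3_cases x with hh | hh | hh
    · exact hh
    · rw [hh] at this; exact absurd this (by decide)
    · rw [hh] at this; exact absurd this (by decide)
  exact ⟨t, by rw [ht, hx]⟩

lemma RSB_last {n : ℕ} {w : Word} (h : RSB n w) (hn : 1 ≤ n) : ∃ t, w = t ++ [1] := by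
  obtain ⟨t, x, ht⟩ := eq_append_last (u := w) (by intro hc; rw [hc] at h; have := h.1; simp at this; omega)
  have hf0 : Fac (t ++ [x, 0] ++ []) := by
    have := h.2.1; rw [ht] at this; simpa using this
  have hf2 : Fac (t ++ [x, 2] ++ []) := by
    have := h.2.2; rw [ht] at this; simpa using this
  have h0 := okp_adj_append hf0
  have h2 := okp_adj_append hf2
  have hx : x = 1 := by
    rcases fin3_cases x with hh | hh | hh
    · rw [hh] at h0; exact absurd h0 (by decide)
    · exact hh
    · rw [hh] at h2; exact absurd h2 (by decide)
  exact ⟨t, by rw [ht, hx]⟩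

lemma RSA1 {w : Word} (h : RSA 1 w) : w = [0] := by
  obtain ⟨t, ht⟩ := RSA_last h (by omega)
  have := h.1
  rw [ht] at this
  simp at this
  rw [ht, this]
  rfl

lemma RSB1 {w : Word} (h : RSB 1 w) : w = [1] := by
  obtain ⟨t, ht⟩ := RSB_last h (by omega)
  have := h.1
  rw [ht] at this
  simp at this
  rw [ht, this]
  rfl

lemma RSA_last2 {n : ℕ} {w : Word} (h : RSA n w) (hn : 2 ≤ n) : ∃ t, w = t ++ [2, 0] := by
  obtain ⟨t, ht⟩ := RSA_last h (by omega)
  have htn : t ≠ [] := by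
    intro hc
    have := h.1
    rw [ht, hc] at this
    simp at this
    omega
  obtain ⟨t2, y, ht2⟩ := eq_append_last htn
  have hyo : okp y 0 := by
    have hf : Fac (t2 ++ [y, 0] ++ [1]) := by
      have := h.2.1
      rw [ht, ht2] at this
      simpa using this
    exact okp_adj_append hf
  have hy : y = 1 ∨ y = 2 := by
    rcases fin3_cases y with hh | hh | hh
    · rw [hh] at hyo; exact absurd hyo (by decide)
    · exact Or.inl hh
    · exact Or.inr hh
  rcases hy with hy | hy
  · exfalso
    apply NO101
    have := h.2.1
    rw [ht, ht2, hy] at this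
    exact fac_infix this ⟨t2, [], by simp⟩
  · exact ⟨t2, by rw [ht, ht2, hy]; simp⟩

lemma RSA2 {w : Word} (h : RSA 2 w) : w = [2, 0] := by
  obtain ⟨t, ht⟩ := RSA_last2 h (by omega)
  have := h.1
  rw [ht] at this
  simp at this
  rw [ht, this]
  rfl

lemma RSB_last2 {n : ℕ} {w : Word} (h : RSB n w) (hn : 2 ≤ n) : ∃ t, w = t ++ [0, 1] := by
  obtain ⟨t, ht⟩ := RSB_last h (by omega)
  have htn : t ≠ [] := by
    intro hc
    have := h.1
    rw [ht, hc] at this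
    simp at this
    omega
  obtain ⟨t2, y, ht2⟩ := eq_append_last htn
  have hyo : okp y 1 := by
    have hf : Fac (t2 ++ [y, 1] ++ [0]) := by
      have := h.2.1
      rw [ht, ht2] at this
      simpa using this
    exact okp_adj_append hf
  have hy : y = 0 := by
    rcases fin3_cases y with hh | hh | hh
    · exact hh
    · rw [hh] at hyo; exact absurd hyo (by decide)
    · rw [hh] at hyo; exact absurd hyo (by decide)
  exact ⟨t2, by rw [ht, ht2, hy]; simp⟩

lemma RSB2 {w : Word} (h : RSB 2 w) : w = [0, 1] := by
  obtain ⟨t, ht⟩ := RSB_last2 h (by omega)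
  have := h.1
  rw [ht] at this
  simp at this
  rw [ht, this]
  rfl

lemma sOK_len {s : Word} (h : sOK s) : s.length ≤ 1 := by
  rcases h with rfl | rfl | rfl <;> simp

-- length growth of gammaM on special words
lemma gammaM_len_split (t : Word) (x : Fin 3) :
    (gammaM (t ++ [x])).length = (gammaM t).length + (gammaM [x]).length := by
  rw [gammaM_append]; simp

lemma gamma_len_RSA {m : ℕ} {v : Word} (h : RSA m v) (hm : 2 ≤ m) :
    m + 2 ≤ (gammaM v).length := by
  obtain ⟨t, ht⟩ := RSA_last2 h hm
  have hlt : t.length = m - 2 := by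
    have := h.1; rw [ht] at this; simp at this; omega
  have h1 := length_gammaM_ge t
  rw [ht, show t ++ [(2 : Fin 3), 0] = (t ++ [2]) ++ [0] by simp, gammaM_len_split, gammaM_len_split]
  simp
  omega

lemma gamma_len_RSB {m : ℕ} {v : Word} (h : RSB m v) (hm : 2 ≤ m) :
    m + 1 ≤ (gammaM v).length := by
  obtain ⟨t, ht⟩ := RSB_last2 h hm
  have hlt : t.length = m - 2 := by
    have := h.1; rw [ht] at this; simp at this; omega
  have h1 := length_gammaM_ge t
  rw [ht, show t ++ [(0 : Fin 3), 1] = (t ++ [0]) ++ [1] by simp, gammaM_len_split, gammaM_len_split]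
  simp
  omega

-- monotonicity of the gammaM-length of the chains
lemma gBseq_mono {a b : ℕ} (h : a ≤ b) :
    (gammaM (Bseq a)).length + (b - a) ≤ (gammaM (Bseq b)).length := by
  induction b with
  | zero => simp [Nat.le_zero.mp h]
  | succ b ih =>
      rcases Nat.lt_or_ge a (b+1) with h' | h'
      · obtain ⟨y, hy⟩ := Bseq_cons b
        have hsz := size_pos y
        have : (gammaM (Bseq (b+1))).length = (gammaM [y]).length + (gammaM (Bseq b)).length := by
          rw [hy, gammaM_cons]; simp
        have := ih (by omega)
        omega
      · have : a = b + 1 := by omega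
        simp [this]

lemma gAseq_mono {a b : ℕ} (h : a ≤ b) :
    (gammaM (Aseq a)).length + (b - a) ≤ (gammaM (Aseq b)).length := by
  induction b with
  | zero => simp [Nat.le_zero.mp h]
  | succ b ih =>
      rcases Nat.lt_or_ge a (b+1) with h' | h'
      · obtain ⟨y, hy⟩ := Aseq_cons b
        have hsz := size_pos y
        have : (gammaM (Aseq (b+1))).length = (gammaM [y]).length + (gammaM (Aseq b)).length := by
          rw [hy, gammaM_cons]; simp
        have := ih (by omega)
        omega
      · have : a = b + 1 := by omega
        simp [this]

-- LAYER 8 : parse and uniqueness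
lemma x_ne_zero_of_okp {x : Fin 3} (h : okp 0 x) : x = 1 ∨ x = 2 := by
  rcases fin3_cases x with hh | hh | hh
  · rw [hh] at h; exact absurd h (by decide)
  · exact Or.inl hh
  · exact Or.inr hh

lemma parseA {n : ℕ} {w : Word} (hn : 3 ≤ n) (h : RSA n w) :
    ∃ s v m, sOK s ∧ w = s ++ gammaM v ++ [0] ∧ RSB m v ∧ 1 ≤ m ∧ m + 1 < n := by
  obtain ⟨t, ht⟩ := RSA_last h (by omega)
  have htl : t.length = n - 1 := by
    have := h.1; rw [ht] at this; simp at this; omega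
  have hf1 : Fac (t ++ [0, 1]) := by
    have := h.2.1; rw [ht] at this; simpa using this
  have hf2 : Fac (t ++ [0, 2]) := by
    have := h.2.2; rw [ht] at this; simpa using this
  obtain ⟨s₁, v₁, hs₁, he₁, hfv₁⟩ := desubA hf1
  obtain ⟨s₂, v₂, hs₂, he₂, hfv₂⟩ := desubA hf2
  rw [if_pos rfl] at hfv₁
  rw [if_neg (by decide : (2 : Fin 3) ≠ 1)] at hfv₂
  have heq : s₁ ++ gammaM v₁ = s₂ ++ gammaM v₂ := by rw [← he₁, ← he₂]
  have hbound : ∀ mm vv, RSB mm vv → 1 ≤ mm → (gammaM vv).length ≤ n - 1 →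
      mm + 1 < n := by
    intro mm vv hvv hmm hlen
    rcases Nat.lt_or_ge mm 2 with h' | h'
    · omega
    · have := gamma_len_RSB hvv h'
      omega
  rcases reconcile hs₁ hs₂ heq with ⟨hss, hvv⟩ | ⟨hA, hB, hC⟩ | ⟨hA, hB, hC⟩
  · -- same parse
    have hrsb : RSB v₁.length v₁ := ⟨rfl, hfv₁, by rw [hvv]; exact hfv₂⟩
    have hm1 : 1 ≤ v₁.length := by
      rcases Nat.eq_zero_or_pos v₁.length with h0 | h0
      · exfalso
        have : v₁ = [] := List.eq_nil_of_length_eq_zero h0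
        rw [this] at he₁
        simp at he₁
        have := sOK_len hs₁
        rw [he₁] at htl
        omega
      · exact h0
    refine ⟨s₁, v₁, v₁.length, hs₁, by rw [ht, he₁], hrsb, hm1, ?_⟩
    apply hbound _ _ hrsb hm1
    have := congrArg List.length he₁
    simp at this
    omega
  · -- s₁ = [], s₂ = [2], v₁ = 1 :: v₂
    have hfv₂0 : Fac (v₂ ++ [0]) := by
      have : Fac ([1] ++ (v₂ ++ [0])) := by
        rw [hC] at hfv₁
        simpa using hfv₁
      exact fac_infix this ⟨[1], [], by simp⟩
    have hrsb : RSB v₂.length v₂ := ⟨rfl, hfv₂0, hfv₂⟩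
    have hm1 : 1 ≤ v₂.length := by
      rcases Nat.eq_zero_or_pos v₂.length with h0 | h0
      · exfalso
        have hnil : v₂ = [] := List.eq_nil_of_length_eq_zero h0
        rw [hnil] at he₂
        rw [hB] at he₂
        simp at he₂
        rw [he₂] at htl
        simp at htl
        omega
      · exact h0
    refine ⟨[2], v₂, v₂.length, Or.inr (Or.inr rfl), by rw [ht, he₂, hB], hrsb, hm1, ?_⟩
    apply hbound _ _ hrsb hm1
    have := congrArg List.length he₂
    rw [hB] at this
    simp at this
    omega
  · -- s₂ = [], s₁ = [2], v₂ = 1 :: v₁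
    have hfv₁2 : Fac (v₁ ++ [2]) := by
      have : Fac ([1] ++ (v₁ ++ [2])) := by
        rw [hC] at hfv₂
        simpa using hfv₂
      exact fac_infix this ⟨[1], [], by simp⟩
    have hrsb : RSB v₁.length v₁ := ⟨rfl, hfv₁, hfv₁2⟩
    have hm1 : 1 ≤ v₁.length := by
      rcases Nat.eq_zero_or_pos v₁.length with h0 | h0
      · exfalso
        have hnil : v₁ = [] := List.eq_nil_of_length_eq_zero h0
        rw [hnil] at he₁
        rw [hB] at he₁
        simp at he₁
        rw [he₁] at htl
        simp at htl
        omega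
      · exact h0
    refine ⟨[2], v₁, v₁.length, Or.inr (Or.inr rfl), by rw [ht, he₁, hB], hrsb, hm1, ?_⟩
    apply hbound _ _ hrsb hm1
    have := congrArg List.length he₁
    rw [hB] at this
    simp at this
    omega

lemma parseB {n : ℕ} {w : Word} (hn : 3 ≤ n) (h : RSB n w) :
    ∃ s v₀ m, sOK s ∧ w = s ++ gammaM (v₀ ++ [0]) ∧ RSA m (v₀ ++ [0]) ∧ 1 ≤ m ∧ m + 1 < n ∧
      m = v₀.length + 1 := by
  obtain ⟨t, ht⟩ := RSB_last h (by omega)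
  have htl : t.length = n - 1 := by
    have := h.1; rw [ht] at this; simp at this; omega
  have hf0 : Fac (t ++ [1, 0]) := by
    have := h.2.1; rw [ht] at this; simpa using this
  have hf2 : Fac (t ++ [1, 2]) := by
    have := h.2.2; rw [ht] at this; simpa using this
  obtain ⟨s₁, u₁, x₁, hs₁, he₁, hfv₁, hx₁a, hx₁b⟩ := desubB (by omega) hf0
  obtain ⟨s₂, u₂, x₂, hs₂, he₂, hfv₂, hx₂a, hx₂b⟩ := desubB (by omega) hf2
  have hx₁ : x₁ = 2 := by
    have hok : okp 0 x₁ := by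
      have : Fac (u₁ ++ [0, x₁] ++ []) := by simpa using hfv₁
      exact okp_adj_append this
    rcases hx₁b rfl with hh | hh
    · exfalso; rw [hh] at hok; exact absurd hok (by decide)
    · exact hh
  have hx₂ : x₂ = 1 := hx₂a rfl
  rw [hx₁] at hfv₁
  rw [hx₂] at hfv₂
  have heq : s₁ ++ gammaM (u₁ ++ [0]) = s₂ ++ gammaM (u₂ ++ [0]) := by rw [← he₁, ← he₂]
  have hwt : w = t ++ [1] := ht
  have hbound : ∀ vv₀, RSA (vv₀.length + 1) (vv₀ ++ [(0 : Fin 3)]) →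
      (gammaM (vv₀ ++ [(0:Fin 3)])).length ≤ n → vv₀.length + 2 < n := by
    intro vv hvv hlen
    rcases Nat.lt_or_ge (vv.length + 1) 2 with h' | h'
    · have hv0 : vv.length = 0 := by omega
      have : vv = [] := List.eq_nil_of_length_eq_zero hv0
      omega
    · have := gamma_len_RSA hvv h'
      omega
  rcases reconcile hs₁ hs₂ heq with ⟨hss, hvv⟩ | ⟨hA, hB, hC⟩ | ⟨hA, hB, hC⟩
  · have hu : u₁ = u₂ := by
      have hl : u₁.length = u₂.length := by
        have := congrArg List.length hvv; simp at this; omega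
      exact (List.append_inj hvv (by omega)).1
    have hrsa : RSA (u₁.length + 1) (u₁ ++ [0]) := by
      refine ⟨by simp, ?_, ?_⟩
      · rw [hu]
        have : u₂ ++ [0] ++ [1] = u₂ ++ [0, 1] := by simp
        rw [this]; exact hfv₂
      · have : u₁ ++ [0] ++ [2] = u₁ ++ [0, 2] := by simp
        rw [this]; exact hfv₁
    refine ⟨s₁, u₁, u₁.length + 1, hs₁, by rw [hwt, he₁], hrsa, by omega, ?_, rfl⟩
    apply hbound _ hrsa
    have := congrArg List.length he₁
    simp at this
    omega
  · -- s₁ = [], s₂ = [2], u₁ ++ [0] = 1 :: (u₂ ++ [0])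
    have hu : u₁ = 1 :: u₂ := by
      have h' : u₁ ++ [0] = (1 :: u₂) ++ [(0 : Fin 3)] := by simpa using hC
      have hl : u₁.length = (1 :: u₂ : Word).length := by
        have := congrArg List.length h'; simp at this ⊢; omega
      exact (List.append_inj h' (by simpa using hl)).1
    have hfv₁' : Fac (u₂ ++ [0, 2]) := by
      have : Fac ([1] ++ (u₂ ++ [0, 2])) := by
        rw [hu] at hfv₁
        simpa using hfv₁
      exact fac_infix this ⟨[1], [], by simp⟩
    have hrsa : RSA (u₂.length + 1) (u₂ ++ [0]) := by
      refine ⟨by simp, ?_, ?_⟩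
      · have : u₂ ++ [0] ++ [1] = u₂ ++ [0, 1] := by simp
        rw [this]; exact hfv₂
      · have : u₂ ++ [0] ++ [2] = u₂ ++ [0, 2] := by simp
        rw [this]; exact hfv₁'
    refine ⟨[2], u₂, u₂.length + 1, Or.inr (Or.inr rfl), by rw [hwt, he₂, hB], hrsa, by omega, ?_, rfl⟩
    apply hbound _ hrsa
    have := congrArg List.length he₂
    rw [hB] at this
    simp at this
    omega
  · -- s₂ = [], s₁ = [2], u₂ ++ [0] = 1 :: (u₁ ++ [0])
    have hfv₂' : Fac (u₁ ++ [0, 1]) := by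
      have h' : u₂ = 1 :: u₁ := by
        have h'' : u₂ ++ [0] = (1 :: u₁) ++ [(0 : Fin 3)] := by simpa using hC
        have hl : u₂.length = (1 :: u₁ : Word).length := by
          have := congrArg List.length h''; simp at this ⊢; omega
        exact (List.append_inj h'' (by simpa using hl)).1
      have : Fac ([1] ++ (u₁ ++ [0, 1])) := by
        rw [h'] at hfv₂
        simpa using hfv₂
      exact fac_infix this ⟨[1], [], by simp⟩
    have hrsa : RSA (u₁.length + 1) (u₁ ++ [0]) := by
      refine ⟨by simp, ?_, ?_⟩
      · have : u₁ ++ [0] ++ [1] = u₁ ++ [0, 1] := by simp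
        rw [this]; exact hfv₂'
      · have : u₁ ++ [0] ++ [2] = u₁ ++ [0, 2] := by simp
        rw [this]; exact hfv₁
    refine ⟨[2], u₁, u₁.length + 1, Or.inr (Or.inr rfl), by rw [hwt, he₁, hB], hrsa, by omega, ?_, rfl⟩
    apply hbound _ hrsa
    have := congrArg List.length he₁
    rw [hB] at this
    simp at this
    omega

-- LAYER 8b : lift and clash
lemma liftA1 {n : ℕ} {v : Word} (h : RSA n ([1] ++ gammaM v ++ [0])) :
    RSB (v.length + 1) ([0] ++ v) := by
  have h1 : Fac ([1] ++ gammaM v ++ [0, 1]) := by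
    have := h.2.1
    rw [show ([1] ++ gammaM v ++ [0]) ++ [1] = [1] ++ gammaM v ++ [0, 1] by simp] at this
    exact this
  have h2 : Fac ([1] ++ gammaM v ++ [0, 2]) := by
    have := h.2.2
    rw [show ([1] ++ gammaM v ++ [0]) ++ [2] = [1] ++ gammaM v ++ [0, 2] by simp] at this
    exact this
  obtain ⟨z1, hz1, hfz1⟩ := megaA (Or.inl rfl) h1
  obtain ⟨z2, hz2, hfz2⟩ := megaA (Or.inl rfl) h2
  rw [hz1.1 rfl, if_pos rfl] at hfz1
  rw [hz2.1 rfl, if_neg (by decide : (2:Fin 3) ≠ 1)] at hfz2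
  refine ⟨by simp, ?_, ?_⟩
  · rw [show ([0] ++ v) ++ [0] = [0] ++ v ++ [0] by simp]; exact hfz1
  · rw [show ([0] ++ v) ++ [2] = [0] ++ v ++ [2] by simp]; exact hfz2

lemma liftA2 {n : ℕ} {v : Word} (h : RSA n ([2] ++ gammaM v ++ [0])) :
    ∃ z₁ z₂, (z₁ = 1 ∨ z₁ = 2) ∧ (z₂ = 1 ∨ z₂ = 2) ∧
      Fac ([z₁] ++ v ++ [0]) ∧ Fac ([z₂] ++ v ++ [2]) := by
  have h1 : Fac ([2] ++ gammaM v ++ [0, 1]) := by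
    have := h.2.1
    rw [show ([2] ++ gammaM v ++ [0]) ++ [1] = [2] ++ gammaM v ++ [0, 1] by simp] at this
    exact this
  have h2 : Fac ([2] ++ gammaM v ++ [0, 2]) := by
    have := h.2.2
    rw [show ([2] ++ gammaM v ++ [0]) ++ [2] = [2] ++ gammaM v ++ [0, 2] by simp] at this
    exact this
  obtain ⟨z1, hz1, hfz1⟩ := megaA (Or.inr rfl) h1
  obtain ⟨z2, hz2, hfz2⟩ := megaA (Or.inr rfl) h2
  rw [if_pos rfl] at hfz1
  rw [if_neg (by decide : (2:Fin 3) ≠ 1)] at hfz2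
  exact ⟨z1, z2, hz1.2 rfl, hz2.2 rfl, hfz1, hfz2⟩

lemma liftB1 {n : ℕ} {v₀ : Word} (h : RSB n ([1] ++ gammaM (v₀ ++ [0]))) :
    RSA (v₀.length + 2) ([0] ++ (v₀ ++ [0])) := by
  have h1 : Fac ([1] ++ gammaM (v₀ ++ [0]) ++ [0]) := by
    have := h.2.1
    rw [show ([1] ++ gammaM (v₀ ++ [0])) ++ [0] = [1] ++ gammaM (v₀ ++ [0]) ++ [0] by simp] at this
    exact this
  have h2 : Fac ([1] ++ gammaM (v₀ ++ [0]) ++ [2]) := by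
    have := h.2.2
    rw [show ([1] ++ gammaM (v₀ ++ [0])) ++ [2] = [1] ++ gammaM (v₀ ++ [0]) ++ [2] by simp] at this
    exact this
  obtain ⟨z1, y1, hz1, hy1, hf1⟩ := megaB (Or.inl rfl) h1
  obtain ⟨z2, y2, hz2, hy2, hf2⟩ := megaB (Or.inl rfl) h2
  rw [hz1.1 rfl] at hf1
  rw [hz2.1 rfl] at hf2
  have hy1v : y1 = 2 := by
    rcases hy1.2 rfl with hh | hh
    · exfalso
      rw [hh] at hf1
      have : Fac (([0] ++ v₀) ++ [0, 0] ++ []) := by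
        rw [show ([0] ++ v₀) ++ [0, 0] ++ [] = [0] ++ (v₀ ++ [0]) ++ [0] by simp]
        exact hf1
      exact absurd (okp_adj_append this) (by decide)
    · exact hh
  have hy2v : y2 = 1 := hy2.1 rfl
  rw [hy1v] at hf1
  rw [hy2v] at hf2
  refine ⟨by simp, ?_, ?_⟩
  · rw [show ([0] ++ (v₀ ++ [0])) ++ [1] = [0] ++ (v₀ ++ [0]) ++ [1] by simp]; exact hf2
  · rw [show ([0] ++ (v₀ ++ [0])) ++ [2] = [0] ++ (v₀ ++ [0]) ++ [2] by simp]; exact hf1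

lemma liftB2 {n : ℕ} {v₀ : Word} (h : RSB n ([2] ++ gammaM (v₀ ++ [0]))) :
    ∃ z₁ z₂, (z₁ = 1 ∨ z₁ = 2) ∧ (z₂ = 1 ∨ z₂ = 2) ∧
      Fac ([z₁] ++ (v₀ ++ [0]) ++ [1]) ∧ Fac ([z₂] ++ (v₀ ++ [0]) ++ [2]) := by
  have h1 : Fac ([2] ++ gammaM (v₀ ++ [0]) ++ [0]) := by
    have := h.2.1
    rw [show ([2] ++ gammaM (v₀ ++ [0])) ++ [0] = [2] ++ gammaM (v₀ ++ [0]) ++ [0] by simp] at this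
    exact this
  have h2 : Fac ([2] ++ gammaM (v₀ ++ [0]) ++ [2]) := by
    have := h.2.2
    rw [show ([2] ++ gammaM (v₀ ++ [0])) ++ [2] = [2] ++ gammaM (v₀ ++ [0]) ++ [2] by simp] at this
    exact this
  obtain ⟨z1, y1, hz1, hy1, hf1⟩ := megaB (Or.inr rfl) h1
  obtain ⟨z2, y2, hz2, hy2, hf2⟩ := megaB (Or.inr rfl) h2
  have hy1v : y1 = 2 := by
    rcases hy1.2 rfl with hh | hh
    · exfalso
      rw [hh] at hf1
      have : Fac (([z1] ++ v₀) ++ [0, 0] ++ []) := by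
        rw [show ([z1] ++ v₀) ++ [0, 0] ++ [] = [z1] ++ (v₀ ++ [0]) ++ [0] by simp]
        exact hf1
      exact absurd (okp_adj_append this) (by decide)
    · exact hh
  have hy2v : y2 = 1 := hy2.1 rfl
  rw [hy1v] at hf1
  rw [hy2v] at hf2
  exact ⟨z2, z1, hz2.2 rfl, hz1.2 rfl, hf2, hf1⟩

lemma clashA {n m : ℕ} (hmn : m + 1 < n) (hm : 1 ≤ m)
    (IHB : ∀ mm, mm < n → ∀ u u' : Word, RSB mm u → RSB mm u' → u = u')
    {v : Word} (hvl : v.length = m)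
    (h1 : RSA n ([1] ++ gammaM v ++ [0])) (h2 : RSA n ([2] ++ gammaM v ++ [0])) : False := by
  have hB0 := liftA1 h1
  rw [hvl] at hB0
  obtain ⟨z₁, z₂, hz₁, hz₂, hf₁, hf₂⟩ := liftA2 h2
  by_cases hzz : z₁ = z₂
  · have hrsb : RSB (m + 1) ([z₁] ++ v) := by
      refine ⟨by simp; omega, ?_, ?_⟩
      · rw [show ([z₁] ++ v) ++ [0] = [z₁] ++ v ++ [0] by simp]; exact hf₁
      · rw [show ([z₁] ++ v) ++ [2] = [z₁] ++ v ++ [2] by simp]; rw [hzz]; exact hf₂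
    have := IHB (m+1) (by omega) _ _ hrsb hB0
    have hz0 : z₁ = 0 := by
      have := List.append_inj this (by simp)
      have h' := this.1
      exact (List.cons.injEq _ _ _ _ ▸ h').1
    rcases hz₁ with hh | hh <;> rw [hz0] at hh <;> exact absurd hh (by decide)
  · have hvne : v ≠ [] := by intro hc; rw [hc] at hvl; simp at hvl; omega
    obtain ⟨b, v₂, rfl⟩ : ∃ b v₂, v = b :: v₂ := by
      cases v with
      | nil => exact absurd rfl hvne
      | cons b v₂ => exact ⟨b, v₂, rfl⟩
    have hb0 : b = 0 := by
      -- one of z₁, z₂ equals 2; get okp 2 b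
      have h2b : Fac ([2] ++ (b :: v₂) ++ [0]) ∨ Fac ([2] ++ (b :: v₂) ++ [2]) := by
        rcases hz₁ with hh | hh
        · rcases hz₂ with hh' | hh'
          · exact absurd (hh.trans hh'.symm) hzz
          · right; have := hf₂; rw [hh'] at this; exact this
        · left; have := hf₁; rw [hh] at this; exact this
      have hok : okp 2 b := by
        rcases h2b with hf | hf
        · exact okp_adj_append (A := []) (B := v₂ ++ [0]) (by simpa using hf)
        · exact okp_adj_append (A := []) (B := v₂ ++ [2]) (by simpa using hf)
      rcases fin3_cases b with hh | hh | hh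
      · exact hh
      · rw [hh] at hok; exact absurd hok (by decide)
      · rw [hh] at hok; exact absurd hok (by decide)
    have hok0 : okp 0 b := by
      have := hB0.2.1
      exact okp_adj_append (A := []) (B := v₂ ++ [0]) (by simpa using this)
    rw [hb0] at hok0
    exact absurd hok0 (by decide)

lemma clashB {n : ℕ} {v₀ : Word}
    (hmn : v₀.length + 2 < n)
    (IHA : ∀ mm, mm < n → ∀ u u' : Word, RSA mm u → RSA mm u' → u = u')
    (h1 : RSB n ([1] ++ gammaM (v₀ ++ [0]))) (h2 : RSB n ([2] ++ gammaM (v₀ ++ [0]))) : False := by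
  have hA0 := liftB1 h1
  obtain ⟨z₁, z₂, hz₁, hz₂, hf₁, hf₂⟩ := liftB2 h2
  by_cases hzz : z₁ = z₂
  · have hrsa : RSA (v₀.length + 2) ([z₁] ++ (v₀ ++ [0])) := by
      refine ⟨by simp, ?_, ?_⟩
      · rw [show ([z₁] ++ (v₀ ++ [0])) ++ [1] = [z₁] ++ (v₀ ++ [0]) ++ [1] by simp]; exact hf₁
      · rw [show ([z₁] ++ (v₀ ++ [0])) ++ [2] = [z₁] ++ (v₀ ++ [0]) ++ [2] by simp]
        rw [hzz]; exact hf₂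
    have := IHA (v₀.length + 2) (by omega) _ _ hrsa hA0
    have hz0 : z₁ = 0 := by
      have := List.append_inj this (by simp)
      have h' := this.1
      exact (List.cons.injEq _ _ _ _ ▸ h').1
    rcases hz₁ with hh | hh <;> rw [hz0] at hh <;> exact absurd hh (by decide)
  · obtain ⟨b, v₂, hv⟩ : ∃ b v₂, v₀ ++ [(0:Fin 3)] = b :: v₂ := by
      cases hv : (v₀ ++ [(0:Fin 3)]) with
      | nil => exact absurd hv (by simp)
      | cons b v₂ => exact ⟨b, v₂, rfl⟩
    have hb0 : b = 0 := by
      have h2b : Fac ([2] ++ (b :: v₂) ++ [1]) ∨ Fac ([2] ++ (b :: v₂) ++ [2]) := by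
        rcases hz₁ with hh | hh
        · rcases hz₂ with hh' | hh'
          · exact absurd (hh.trans hh'.symm) hzz
          · right; have := hf₂; rw [hh', hv] at this; exact this
        · left; have := hf₁; rw [hh, hv] at this; exact this
      have hok : okp 2 b := by
        rcases h2b with hf | hf
        · exact okp_adj_append (A := []) (B := v₂ ++ [1]) (by simpa using hf)
        · exact okp_adj_append (A := []) (B := v₂ ++ [2]) (by simpa using hf)
      rcases fin3_cases b with hh | hh | hh
      · exact hh
      · rw [hh] at hok; exact absurd hok (by decide)
      · rw [hh] at hok; exact absurd hok (by decide)
    have hok0 : okp 0 b := by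
      have := hA0.2.1
      rw [hv] at this
      exact okp_adj_append (A := []) (B := v₂ ++ [1]) (by simpa using this)
    rw [hb0] at hok0
    exact absurd hok0 (by decide)

-- LAYER 8c : keyA, keyB, uniqueness
lemma keyA {n : ℕ} (hn : 3 ≤ n)
    (IHB : ∀ mm, mm < n → ∀ u u' : Word, RSB mm u → RSB mm u' → u = u')
    {w w' s s' v v' : Word} {m m' : ℕ}
    (hs : sOK s) (hs' : sOK s') (hw : RSA n w) (hw' : RSA n w')
    (he : w = s ++ gammaM v ++ [0]) (he' : w' = s' ++ gammaM v' ++ [0])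
    (hv : RSB m v) (hv' : RSB m' v')
    (hm : 1 ≤ m) (hmn : m + 1 < n) (hm' : 1 ≤ m') (hmn' : m' + 1 < n)
    (hle : m ≤ m') : w = w' := by
  have hvB : v = Bseq m := IHB m (by omega) _ _ hv (Bseq_RSB m)
  have hvB' : v' = Bseq m' := IHB m' (by omega) _ _ hv' (Bseq_RSB m')
  have hlen : s.length + (gammaM v).length + 1 = n := by
    have := hw.1; rw [he] at this; simp at this; omega
  have hlen' : s'.length + (gammaM v').length + 1 = n := by
    have := hw'.1; rw [he'] at this; simp at this; omega
  rcases Nat.eq_or_lt_of_le hle with heq | hlt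
  · have hvv : v = v' := by rw [hvB, hvB', heq]
    have hsl : s.length = s'.length := by rw [hvv] at hlen; omega
    rcases hs with rfl | rfl | rfl <;> rcases hs' with rfl | rfl | rfl
    · rw [he, he', hvv]
    · simp at hsl
    · simp at hsl
    · simp at hsl
    · rw [he, he', hvv]
    · -- s = [1], s' = [2] : clash
      rw [he] at hw
      rw [he', ← hvv] at hw'
      exact (clashA hmn hm IHB hv.1 hw hw').elim
    · simp at hsl
    · -- s = [2], s' = [1]
      exfalso
      rw [he] at hw
      rw [he', ← hvv] at hw'
      exact clashA hmn hm IHB hv.1 hw' hw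
    · rw [he, he', hvv]
  · have hmono := gBseq_mono (le_of_lt hlt)
    rw [← hvB, ← hvB'] at hmono
    have hsle := sOK_len hs
    have hsle' := sOK_len hs'
    have hm1 : m' = m + 1 := by omega
    have hdiff : (gammaM v').length = (gammaM v).length + 1 := by omega
    have hs'e : s' = [] := by
      have hl0 : s'.length = 0 := by omega
      rcases hs' with rfl | rfl | rfl
      · rfl
      · simp at hl0
      · simp at hl0
    obtain ⟨y, hy⟩ := Bseq_cons m
    have hv'y : v' = y :: v := by rw [hvB', hm1, hy, ← hvB]
    have hsy : (gammaM [y]).length = 1 := by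
      have hgc : gammaM v' = gammaM [y] ++ gammaM v := by rw [hv'y, gammaM_cons]
      have := congrArg List.length hgc
      simp at this
      omega
    have hy1 : y = 1 := by
      rcases fin3_cases y with hh | hh | hh
      · rw [hh] at hsy; simp at hsy
      · exact hh
      · rw [hh] at hsy; simp at hsy
    have hw'eq : w' = [2] ++ gammaM v ++ [0] := by
      rw [he', hs'e, hv'y, hy1, gammaM_cons]
      simp
    rcases hs with rfl | rfl | rfl
    · exfalso; simp at hlen; omega
    · rw [he] at hw
      rw [hw'eq] at hw'
      exact (clashA hmn hm IHB hv.1 hw hw').elim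
    · rw [he, hw'eq]

lemma keyB {n : ℕ} (hn : 3 ≤ n)
    (IHA : ∀ mm, mm < n → ∀ u u' : Word, RSA mm u → RSA mm u' → u = u')
    {w w' s s' v₀ v₀' : Word} {m m' : ℕ}
    (hs : sOK s) (hs' : sOK s') (hw : RSB n w) (hw' : RSB n w')
    (he : w = s ++ gammaM (v₀ ++ [0])) (he' : w' = s' ++ gammaM (v₀' ++ [0]))
    (hv : RSA m (v₀ ++ [0])) (hv' : RSA m' (v₀' ++ [0]))
    (hm : 1 ≤ m) (hmn : m + 1 < n) (hm' : 1 ≤ m') (hmn' : m' + 1 < n)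
    (hmv : m = v₀.length + 1) (hmv' : m' = v₀'.length + 1)
    (hle : m ≤ m') : w = w' := by
  have hvA : v₀ ++ [(0:Fin 3)] = Aseq m := IHA m (by omega) _ _ hv (Aseq_RSA m)
  have hvA' : v₀' ++ [(0:Fin 3)] = Aseq m' := IHA m' (by omega) _ _ hv' (Aseq_RSA m')
  have hlen : s.length + (gammaM (v₀ ++ [0])).length = n := by
    have := hw.1; rw [he] at this; simp at this; omega
  have hlen' : s'.length + (gammaM (v₀' ++ [0])).length = n := by
    have := hw'.1; rw [he'] at this; simp at this; omega
  rcases Nat.eq_or_lt_of_le hle with heq | hlt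
  · have hvv : v₀ = v₀' := by
      have h1 : v₀ ++ [(0:Fin 3)] = v₀' ++ [0] := by rw [hvA, hvA', heq]
      have hl : v₀.length = v₀'.length := by omega
      exact (List.append_inj h1 hl).1
    have hsl : s.length = s'.length := by rw [hvv] at hlen; omega
    rcases hs with rfl | rfl | rfl <;> rcases hs' with rfl | rfl | rfl
    · rw [he, he', hvv]
    · simp at hsl
    · simp at hsl
    · simp at hsl
    · rw [he, he', hvv]
    · rw [he] at hw
      rw [he', ← hvv] at hw'
      exact (clashB (by omega) IHA hw hw').elim
    · simp at hsl
    · exfalso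
      rw [he] at hw
      rw [he', ← hvv] at hw'
      exact clashB (by omega) IHA hw' hw
    · rw [he, he', hvv]
  · have hmono := gAseq_mono (le_of_lt hlt)
    rw [← hvA, ← hvA'] at hmono
    have hsle := sOK_len hs
    have hsle' := sOK_len hs'
    have hm1 : m' = m + 1 := by omega
    have hdiff : (gammaM (v₀' ++ [0])).length = (gammaM (v₀ ++ [0])).length + 1 := by omega
    have hs'e : s' = [] := by
      have hl0 : s'.length = 0 := by omega
      rcases hs' with rfl | rfl | rfl
      · rfl
      · simp at hl0
      · simp at hl0
    obtain ⟨y, hy⟩ := Aseq_cons m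
    have hv'y : v₀' ++ [(0:Fin 3)] = y :: (v₀ ++ [0]) := by rw [hvA', hm1, hy, ← hvA]
    have hsy : (gammaM [y]).length = 1 := by
      have hgc : gammaM (v₀' ++ [0]) = gammaM [y] ++ gammaM (v₀ ++ [0]) := by
        rw [hv'y, gammaM_cons]
      have := congrArg List.length hgc
      simp at this
      omega
    have hy1 : y = 1 := by
      rcases fin3_cases y with hh | hh | hh
      · rw [hh] at hsy; simp at hsy
      · exact hh
      · rw [hh] at hsy; simp at hsy
    have hw'eq : w' = [2] ++ gammaM (v₀ ++ [0]) := by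
      rw [he', hs'e, hv'y, hy1, gammaM_cons]
      simp
    rcases hs with rfl | rfl | rfl
    · exfalso; simp at hlen; omega
    · rw [he] at hw
      rw [hw'eq] at hw'
      exact (clashB (by omega) IHA hw hw').elim
    · rw [he, hw'eq]

theorem uniqRS : ∀ n : ℕ, (∀ w w' : Word, RSA n w → RSA n w' → w = w') ∧
    (∀ w w' : Word, RSB n w → RSB n w' → w = w') := by
  intro n
  induction n using Nat.strong_induction_on with
  | _ n IH =>
  have IHA : ∀ mm, mm < n → ∀ u u' : Word, RSA mm u → RSA mm u' → u = u' :=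
    fun mm h => (IH mm h).1
  have IHB : ∀ mm, mm < n → ∀ u u' : Word, RSB mm u → RSB mm u' → u = u' :=
    fun mm h => (IH mm h).2
  rcases Nat.lt_or_ge n 3 with h3 | h3
  · interval_cases n
    · refine ⟨?_, ?_⟩ <;> intro w w' hw hw' <;>
        rw [List.eq_nil_of_length_eq_zero hw.1, List.eq_nil_of_length_eq_zero hw'.1]
    · exact ⟨fun w w' hw hw' => (RSA1 hw).trans (RSA1 hw').symm,
             fun w w' hw hw' => (RSB1 hw).trans (RSB1 hw').symm⟩
    · exact ⟨fun w w' hw hw' => (RSA2 hw).trans (RSA2 hw').symm,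
             fun w w' hw hw' => (RSB2 hw).trans (RSB2 hw').symm⟩
  · constructor
    · intro w w' hw hw'
      obtain ⟨s, v, m, hs, he, hv, hm, hmn⟩ := parseA h3 hw
      obtain ⟨s', v', m', hs', he', hv', hm', hmn'⟩ := parseA h3 hw'
      rcases le_total m m' with hle | hle
      · exact keyA h3 IHB hs hs' hw hw' he he' hv hv' hm hmn hm' hmn' hle
      · exact (keyA h3 IHB hs' hs hw' hw he' he hv' hv hm' hmn' hm hmn hle).symm
    · intro w w' hw hw'
      obtain ⟨s, v₀, m, hs, he, hv, hm, hmn, hmv⟩ := parseB h3 hw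
      obtain ⟨s', v₀', m', hs', he', hv', hm', hmn', hmv'⟩ := parseB h3 hw'
      rcases le_total m m' with hle | hle
      · exact keyB h3 IHA hs hs' hw hw' he he' hv hv' hm hmn hm' hmn' hmv hmv' hle
      · exact (keyB h3 IHA hs' hs hw' hw he' he hv' hv hm' hmn' hm hmn hmv' hmv hle).symm

-- LAYER 9 : counting
def Fset (n : ℕ) : Set Word := {v : Word | v.length = n ∧ IsFactor v Gword}

lemma Fset_finite (n : ℕ) : (Fset n).Finite :=
  (List.finite_length_eq (Fin 3) n).subset (fun v hv => hv.1)

lemma complexity_eq_Fset (n : ℕ) : complexity Gword n = (Fset n).ncard := rfl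

lemma fac_nil : Fac ([] : Word) := ⟨0, by simp⟩

lemma Fset_zero : Fset 0 = {([] : Word)} := by
  ext v
  simp only [Fset, Set.mem_setOf_eq, Set.mem_singleton_iff]
  constructor
  · intro ⟨h1, _⟩; exact List.eq_nil_of_length_eq_zero h1
  · intro h; subst h; exact ⟨rfl, fac_nil⟩

lemma Fset_one : Fset 1 = {[0], [1], [2]} := by
  ext v
  simp only [Fset, Set.mem_setOf_eq, Set.mem_insert_iff, Set.mem_singleton_iff]
  constructor
  · intro ⟨h1, _⟩
    obtain ⟨t, x, ht⟩ := eq_append_last (u := v) (by intro hc; rw [hc] at h1; simp at h1)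
    have htl : t = [] := by
      have := congrArg List.length ht
      rw [h1] at this
      simp at this
      exact this
    rw [ht, htl]
    simp only [List.nil_append]
    rcases fin3_cases x with hh | hh | hh <;> rw [hh] <;> simp
  · obtain ⟨g0, g1, g2, _⟩ := Gsmall
    intro h
    rcases h with rfl | rfl | rfl
    · exact ⟨rfl, by rw [← g0]; exact fac_single 0⟩
    · exact ⟨rfl, by rw [← g1]; exact fac_single 1⟩
    · exact ⟨rfl, by rw [← g2]; exact fac_single 2⟩

lemma two_ext {n : ℕ} {u : Word} (hn : 1 ≤ n) (hu : u.length = n) {a b : Fin 3}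
    (hab : a ≠ b) (ha : Fac (u ++ [a])) (hb : Fac (u ++ [b])) :
    (RSA n u ∨ RSB n u) ∧ (a = 2 ∨ b = 2) := by
  obtain ⟨t, x, ht⟩ := eq_append_last (u := u) (by intro hc; rw [hc] at hu; simp at hu; omega)
  have hoka : okp x a := by
    apply okp_adj_append (A := t) (B := [])
    rw [show t ++ [x, a] ++ [] = (t ++ [x]) ++ [a] by simp, ← ht]
    exact ha
  have hokb : okp x b := by
    apply okp_adj_append (A := t) (B := [])
    rw [show t ++ [x, b] ++ [] = (t ++ [x]) ++ [b] by simp, ← ht]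
    exact hb
  rcases fin3_cases x with hx | hx | hx
  · -- x = 0 : extensions in {1,2}
    rw [hx] at hoka hokb
    have hA : a = 1 ∨ a = 2 := x_ne_zero_of_okp hoka
    have hB : b = 1 ∨ b = 2 := x_ne_zero_of_okp hokb
    have h12 : (a = 1 ∧ b = 2) ∨ (a = 2 ∧ b = 1) := by
      rcases hA with h | h <;> rcases hB with h' | h'
      · exact absurd (h.trans h'.symm) hab
      · exact Or.inl ⟨h, h'⟩
      · exact Or.inr ⟨h, h'⟩
      · exact absurd (h.trans h'.symm) hab
    have hrs : RSA n u := by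
      rcases h12 with ⟨h1, h2⟩ | ⟨h1, h2⟩
      · exact ⟨hu, by rw [← h1]; exact ha, by rw [← h2]; exact hb⟩
      · exact ⟨hu, by rw [← h2]; exact hb, by rw [← h1]; exact ha⟩
    rcases h12 with ⟨_, h2⟩ | ⟨h1, _⟩
    · exact ⟨Or.inl hrs, Or.inr h2⟩
    · exact ⟨Or.inl hrs, Or.inl h1⟩
  · -- x = 1 : extensions in {0,2}
    rw [hx] at hoka hokb
    have hA : a = 0 ∨ a = 2 := by
      rcases fin3_cases a with hh | hh | hh
      · exact Or.inl hh
      · rw [hh] at hoka; exact absurd hoka (by decide)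
      · exact Or.inr hh
    have hB : b = 0 ∨ b = 2 := by
      rcases fin3_cases b with hh | hh | hh
      · exact Or.inl hh
      · rw [hh] at hokb; exact absurd hokb (by decide)
      · exact Or.inr hh
    have h02 : (a = 0 ∧ b = 2) ∨ (a = 2 ∧ b = 0) := by
      rcases hA with h | h <;> rcases hB with h' | h'
      · exact absurd (h.trans h'.symm) hab
      · exact Or.inl ⟨h, h'⟩
      · exact Or.inr ⟨h, h'⟩
      · exact absurd (h.trans h'.symm) hab
    have hrs : RSB n u := by
      rcases h02 with ⟨h1, h2⟩ | ⟨h1, h2⟩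
      · exact ⟨hu, by rw [← h1]; exact ha, by rw [← h2]; exact hb⟩
      · exact ⟨hu, by rw [← h2]; exact hb, by rw [← h1]; exact ha⟩
    rcases h02 with ⟨_, h2⟩ | ⟨h1, _⟩
    · exact ⟨Or.inr hrs, Or.inr h2⟩
    · exact ⟨Or.inr hrs, Or.inl h1⟩
  · -- x = 2 : unique extension 0
    exfalso
    rw [hx] at hoka hokb
    have ha0 : a = 0 := by
      rcases hoka with ⟨h, _⟩ | ⟨h, _⟩ | ⟨_, h⟩
      · exact absurd h (by decide)
      · exact absurd h (by decide)
      · exact h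
    have hb0 : b = 0 := by
      rcases hokb with ⟨h, _⟩ | ⟨h, _⟩ | ⟨_, h⟩
      · exact absurd h (by decide)
      · exact absurd h (by decide)
      · exact h
    exact hab (ha0.trans hb0.symm)

lemma append_single_ne_of_last {t t' : Word} {x y : Fin 3} (hxy : x ≠ y) :
    t ++ [x] ≠ t' ++ [y] := by
  intro h
  have := congrArg List.reverse h
  rw [List.reverse_append, List.reverse_append] at this
  simp only [List.reverse_cons, List.reverse_nil, List.nil_append, List.singleton_append,
    List.cons.injEq] at this
  exact hxy this.1

lemma Aseq_ne_Bseq {n : ℕ} (hn : 1 ≤ n) : Aseq n ≠ Bseq n := by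
  obtain ⟨t, ht⟩ := Aseq_last hn
  obtain ⟨t', ht'⟩ := Bseq_last hn
  rw [ht, ht']
  exact append_single_ne_of_last (by decide)

lemma append_last_inj {u : Word} {a b : Fin 3} (h : u ++ [a] = u ++ [b]) : a = b := by
  have := List.append_cancel_left h
  exact (List.cons.injEq _ _ _ _ ▸ this).1

lemma Fset_step {n : ℕ} (hn : 1 ≤ n) : (Fset (n+1)).ncard = (Fset n).ncard + 2 := by
  classical
  set A2 : Word := Aseq n ++ [2] with hA2
  set B2 : Word := Bseq n ++ [2] with hB2
  have hA2mem : A2 ∈ Fset (n+1) := ⟨by simp [hA2, length_Aseq], (Aseq_RSA n).2.2⟩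
  have hB2mem : B2 ∈ Fset (n+1) := ⟨by simp [hB2, length_Bseq], (Bseq_RSB n).2.2⟩
  have hAB : A2 ≠ B2 := by
    intro h
    rw [hA2, hB2] at h
    have hl : (Aseq n).length = (Bseq n).length := by
      rw [length_Aseq, length_Bseq]
    exact Aseq_ne_Bseq hn (List.append_inj h hl).1
  set S : Set Word := Fset (n+1) \ {A2, B2} with hS
  have hSfin : S.Finite := (Fset_finite (n+1)).diff
  have hsub : {A2, B2} ⊆ Fset (n+1) := by
    intro z hz
    rcases hz with rfl | rfl
    · exact hA2mem
    · exact hB2mem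
  have hunion : S ∪ {A2, B2} = Fset (n+1) := Set.diff_union_of_subset hsub
  have hdisj : Disjoint S {A2, B2} := Set.disjoint_sdiff_left
  have hcard1 : (Fset (n+1)).ncard = S.ncard + 2 := by
    rw [← hunion, Set.ncard_union_eq hdisj hSfin ((Set.finite_singleton _).insert _),
      Set.ncard_pair hAB]
  -- S maps bijectively onto Fset n via dropLast
  have himage : List.dropLast '' S = Fset n := by
    apply Set.eq_of_subset_of_subset
    · rintro u ⟨w, hwS, rfl⟩
      obtain ⟨hwF, _⟩ := hwS
      obtain ⟨hwl, hwfac⟩ := hwF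
      obtain ⟨t, x, ht⟩ := eq_append_last (u := w) (by intro hc; rw [hc] at hwl; simp at hwl)
      refine ⟨?_, ?_⟩
      · simp [List.length_dropLast, hwl]
      · rw [ht, List.dropLast_concat]
        exact fac_infix hwfac (by rw [ht]; exact ⟨[], [x], by simp⟩)
    · intro u huF
      obtain ⟨hul, hufac⟩ := huF
      obtain ⟨i, hi⟩ := hufac
      have hext : Fac (u ++ [Gword (i + n)]) := by
        refine ⟨i, ?_⟩
        have : u ++ [Gword (i + n)] = factorAt Gword i (n + 1) := by
          rw [factorAt_succ, ← hul, ← hi]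
        rw [this]
        congr 1
        simp [hul]
      by_cases hw0 : u ++ [Gword (i + n)] = A2 ∨ u ++ [Gword (i + n)] = B2
      · -- u is Aseq n or Bseq n
        rcases hw0 with hw0 | hw0
        · have huA : u = Aseq n := by
            have := congrArg List.dropLast hw0
            rw [List.dropLast_concat, hA2, List.dropLast_concat] at this
            exact this
          refine ⟨u ++ [1], ⟨⟨by simp [hul], by rw [huA]; exact (Aseq_RSA n).2.1⟩, ?_⟩,
            List.dropLast_concat⟩
          simp only [Set.mem_insert_iff, Set.mem_singleton_iff]
          push_neg
          constructor
          · rw [huA, hA2]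
            exact append_single_ne_of_last (by decide)
          · rw [huA, hB2]
            intro h
            exact Aseq_ne_Bseq hn (List.append_inj h (by rw [length_Aseq, length_Bseq])).1
        · have huB : u = Bseq n := by
            have := congrArg List.dropLast hw0
            rw [List.dropLast_concat, hB2, List.dropLast_concat] at this
            exact this
          refine ⟨u ++ [0], ⟨⟨by simp [hul], by rw [huB]; exact (Bseq_RSB n).2.1⟩, ?_⟩,
            List.dropLast_concat⟩
          simp only [Set.mem_insert_iff, Set.mem_singleton_iff]
          push_neg
          constructor
          · rw [huB, hA2]
            intro h
            exact Aseq_ne_Bseq hn (List.append_inj h.symm (by rw [length_Aseq, length_Bseq])).1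
          · rw [huB, hB2]
            exact append_single_ne_of_last (by decide)
      · push_neg at hw0
        exact ⟨u ++ [Gword (i + n)], ⟨⟨by simp [hul], hext⟩,
          by simp only [Set.mem_insert_iff, Set.mem_singleton_iff]; push_neg; exact hw0⟩,
          List.dropLast_concat⟩
  have hinj : Set.InjOn List.dropLast S := by
    intro w hwS w' hw'S hdrop
    obtain ⟨⟨hwl, hwfac⟩, hwnot⟩ := hwS
    obtain ⟨⟨hw'l, hw'fac⟩, hw'not⟩ := hw'S
    simp only [Set.mem_insert_iff, Set.mem_singleton_iff] at hwnot hw'not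
    push_neg at hwnot hw'not
    obtain ⟨t, a, hta⟩ := eq_append_last (u := w) (by intro hc; rw [hc] at hwl; simp at hwl)
    obtain ⟨t', b, htb⟩ := eq_append_last (u := w') (by intro hc; rw [hc] at hw'l; simp at hw'l)
    have htt : t = t' := by
      have h1 := congrArg List.dropLast hta
      have h2 := congrArg List.dropLast htb
      rw [List.dropLast_concat] at h1 h2
      rw [← h1, ← h2, hdrop]
    subst htt
    by_cases hab : a = b
    · rw [hta, htb, hab]
    · exfalso
      have htl : t.length = n := by
        rw [hta] at hwl; simp at hwl; omega
      have h2e := two_ext hn htl hab (by rw [← hta]; exact hwfac) (by rw [← htb]; exact hw'fac)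
      rcases h2e.1 with hrs | hrs
      · have huA : t = Aseq n := (uniqRS n).1 t (Aseq n) hrs (Aseq_RSA n)
        rcases h2e.2 with h2 | h2
        · apply hwnot.1
          rw [hta, huA, h2, hA2]
        · apply hw'not.1
          rw [htb, huA, h2, hA2]
      · have huB : t = Bseq n := (uniqRS n).2 t (Bseq n) hrs (Bseq_RSB n)
        rcases h2e.2 with h2 | h2
        · apply hwnot.2
          rw [hta, huB, h2, hB2]
        · apply hw'not.2
          rw [htb, huB, h2, hB2]
  have hcard2 : S.ncard = (Fset n).ncard := by
    rw [← himage, Set.ncard_image_of_injOn hinj]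
  omega


/-- The subword complexity of the word `G` is `2n + 1`. -/
theorem Gword_complexity : ∀ n, complexity Gword n = 2 * n + 1 := by
  intro n
  induction n with
  | zero =>
      rw [complexity_eq_Fset, Fset_zero]
      simp
  | succ n ih =>
      rcases Nat.eq_zero_or_pos n with rfl | hn
      · rw [complexity_eq_Fset, Fset_one]
        rw [Set.ncard_insert_of_notMem (by simp), Set.ncard_insert_of_notMem (by simp),
          Set.ncard_singleton]
      · rw [complexity_eq_Fset, Fset_step hn, ← complexity_eq_Fset, ih]
        ring
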